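/- arXiv:1401.2485 — 5 statements merged into one kernel-verified Lean document; each statement's English description precedes it below -/
import Mathlib

section
/- Let T be a C*-algebra, K ⊆ T a closed two-sided ideal, and γ an action of the circle group 𝕋 on T by *-automorphisms such that z ↦ γ_z(x) is norm-continuous for every x ∈ T and γ_z(K) = K for all z ∈ 𝕋. Define E : T → T by E(x) = ∫_𝕋 γ_z(x) dz (normalized Haar measure), let C = E(T) be the fixed-point algebra, and assume C is the norm closure of an increasing union of finite-dimensional *-subalgebras C_0 ⊆ C_1 ⊆ ⋯. Let Tr be a lower semicontinuous tracial weight on C, set φ = Tr ∘ E on T⁺, and N_φ = {x ∈ T : φ(x*x) = 0}. Assume N_φ is a two-sided ideal of T and C_k⁺ ∩ N_φ ⊆ K for every k. Then every projection p ∈ C with φ(p) = 0 belongs to K. -/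
open MeasureTheory
open scoped ENNReal NNReal ContinuousMapZero

lemma aux_cfcn_mem_closed {A : Type*} [NonUnitalCStarAlgebra A]
    (S : NonUnitalStarSubalgebra ℂ A) (hS : IsClosed (S : Set A))
    {y : A} (hy : IsSelfAdjoint y) (hyS : y ∈ S)
    (f : ℝ → ℝ) (hf : Continuous f) (hf0 : f 0 = 0) : cfcₙ f y ∈ S := by
  have key : ∀ g : C(quasispectrum ℝ y, ℝ)₀, cfcₙHom hy g ∈ S := by
    intro g
    induction g using ContinuousMapZero.induction_on_of_compact (𝕜 := ℝ) (s := quasispectrum ℝ y) with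
    | zero => rw [map_zero]; exact zero_mem S
    | id =>
        have h' : cfcₙHom hy (ContinuousMapZero.id (quasispectrum ℝ y)) = y :=
          cfcₙHom_id (R := ℝ) hy
        rw [h']; exact hyS
    | star_id =>
        have h' : cfcₙHom hy (ContinuousMapZero.id (quasispectrum ℝ y)) = y :=
          cfcₙHom_id (R := ℝ) hy
        rw [star_trivial, h']; exact hyS
    | add g₁ g₂ h₁ h₂ => rw [map_add]; exact add_mem h₁ h₂
    | mul g₁ g₂ h₁ h₂ => rw [map_mul]; exact mul_mem h₁ h₂
    | smul r g h =>
        rw [_root_.map_smul, ← Complex.coe_smul]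
        exact SMulMemClass.smul_mem _ h
    | frequently g hg =>
        have : cfcₙHom hy g ∈ closure (S : Set A) :=
          mem_closure_of_frequently_of_tendsto (hg.mono fun x hx => hx)
            ((cfcₙHom_isClosedEmbedding hy).continuous.tendsto g)
        rwa [hS.closure_eq] at this
  rw [cfcₙ_apply f y hf.continuousOn hf0 hy]
  exact key _

/-- If `p` is an idempotent with `p * p = p` and `t : ℝ` avoids `{0, 1}` by at least `1/3`,
and `y` is within `1/26` of `p`, then `t - y` is invertible. -/
lemma aux_isUnit {T : Type*} [NormedRing T] [StarRing T] [CStarRing T]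
    [NormedAlgebra ℂ T] [StarModule ℂ T] [CompleteSpace T] [Nontrivial T]
    (p y : T) (hp_idem : p * p = p) (hp1 : ‖p‖ ≤ 1) (hpy : ‖p - y‖ ≤ 1/26)
    (t : ℝ) (h1 : 1/3 ≤ |t|) (h2 : 1/3 ≤ |t - 1|) :
    IsUnit (algebraMap ℝ T t - y) := by
  have ht0 : t ≠ 0 := by intro h; rw [h] at h1; norm_num at h1
  have ht1 : t - 1 ≠ 0 := by intro h; rw [h] at h2; norm_num at h2
  set c₁ : ℝ := t⁻¹ with hc₁
  set c₂ : ℝ := (t * (t - 1))⁻¹ with hc₂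
  set r : T := c₁ • (1 : T) + c₂ • p with hr
  set u : T := t • (1 : T) - p with hu
  have e1 : t * c₁ = 1 := mul_inv_cancel₀ ht0
  have e2 : t * c₂ = c₁ + c₂ := by rw [hc₁, hc₂]; field_simp; ring
  have e3 : t * c₂ - c₁ - c₂ = 0 := by rw [e2]; ring
  have h_ur : u * r = 1 := by
    rw [hu, hr]
    have expand : (t • (1 : T) - p) * (c₁ • (1 : T) + c₂ • p)
        = (t * c₁) • (1 : T) + (t * c₂ - c₁ - c₂) • p := by
      simp only [sub_mul, mul_add, smul_mul_assoc, mul_smul_comm, one_mul, mul_one,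
        smul_smul, hp_idem]
      module
    rw [expand, e1, e3, zero_smul, add_zero, one_smul]
  have h_ru : r * u = 1 := by
    rw [hu, hr]
    have expand : (c₁ • (1 : T) + c₂ • p) * (t • (1 : T) - p)
        = (t * c₁) • (1 : T) + (t * c₂ - c₁ - c₂) • p := by
      simp only [sub_mul, mul_sub, add_mul, smul_mul_assoc, mul_smul_comm, one_mul, mul_one,
        smul_smul, hp_idem]
      module
    rw [expand, e1, e3, zero_smul, add_zero, one_smul]
  set U : Tˣ := ⟨u, r, h_ur, h_ru⟩ with hU
  have hrn : ‖r‖ ≤ 12 := by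
    have hc₁n : |c₁| ≤ 3 := by
      rw [hc₁, abs_inv]
      rw [show (3 : ℝ) = (1/3)⁻¹ by norm_num]
      exact inv_anti₀ (by norm_num) h1
    have hc₂n : |c₂| ≤ 9 := by
      rw [hc₂, abs_inv, abs_mul]
      rw [show (9 : ℝ) = (1/3 * (1/3))⁻¹ by norm_num]
      apply inv_anti₀ (by norm_num)
      exact mul_le_mul h1 h2 (by norm_num) (abs_nonneg t)
    calc ‖r‖ ≤ ‖c₁ • (1 : T)‖ + ‖c₂ • p‖ := norm_add_le _ _
      _ = |c₁| * ‖(1 : T)‖ + |c₂| * ‖p‖ := by rw [norm_smul, norm_smul, Real.norm_eq_abs,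
          Real.norm_eq_abs]
      _ ≤ 3 * 1 + 9 * 1 := by
          have := norm_nonneg (1 : T); have := norm_nonneg p
          gcongr <;> simp [norm_one, hp1]
      _ ≤ 12 := by norm_num
  have hv : ‖r * (y - p)‖ < 1 := by
    calc ‖r * (y - p)‖ ≤ ‖r‖ * ‖y - p‖ := norm_mul_le _ _
      _ ≤ 12 * (1/26) := by
          rw [norm_sub_rev]
          exact mul_le_mul hrn hpy (norm_nonneg _) (by norm_num)
      _ < 1 := by norm_num
  set W : Tˣ := Units.oneSub (r * (y - p)) hv with hW
  have key : algebraMap ℝ T t - y = (U * W : Tˣ) := by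
    have hWv : (W : T) = 1 - r * (y - p) := rfl
    have hUv : (U : T) = u := rfl
    rw [Units.val_mul, hUv, hWv, mul_sub, mul_one, ← mul_assoc, h_ur, one_mul, hu,
      Algebra.algebraMap_eq_smul_one]
    abel
  rw [key]
  exact Units.isUnit _

/-- With the setup of Statement 0 (C*-algebra `T`, closed two-sided ideal `K`,
point-norm continuous circle action `γ` preserving `K`, conditional expectation
`E x = ∫_𝕋 γ_z(x) dz` onto the AF fixed-point algebra `C = E(T)` with finite-dimensional
subalgebras `C_k`, lower semicontinuous tracial weight `Tr` on `C`, `φ = Tr ∘ E`,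
`N_φ = {x | φ(x*x) = 0}` a two-sided ideal, `C_k⁺ ∩ N_φ ⊆ K`):
every projection `p ∈ C` with `φ(p) = 0` belongs to `K`. -/
theorem statement2
    {T : Type*} [NormedRing T] [StarRing T] [CStarRing T]
    [NormedAlgebra ℂ T] [StarModule ℂ T] [CompleteSpace T]
    [PartialOrder T] [StarOrderedRing T]
    (K : TwoSidedIdeal T) (hK_closed : IsClosed (K : Set T))
    (γ : AddCircle (1 : ℝ) → (T ≃⋆ₐ[ℂ] T))
    (hγ_grp : ∀ (z w : AddCircle (1 : ℝ)) (x : T), γ (z + w) x = γ z (γ w x))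
    (hγ_cont : ∀ x : T, Continuous fun z => γ z x)
    (hγK : ∀ z : AddCircle (1 : ℝ), (γ z) '' (K : Set T) = (K : Set T))
    (E : T → T)
    (hE : ∀ x : T, E x = ∫ z : AddCircle (1 : ℝ), γ z x)
    (C : Set T) (hC : C = Set.range E)
    (Ck : ℕ → NonUnitalStarSubalgebra ℂ T)
    (hCk_fd : ∀ k, FiniteDimensional ℂ (Ck k))
    (hCk_mono : ∀ k, (Ck k : Set T) ⊆ (Ck (k + 1) : Set T))
    (hCk_sub : ∀ k, (Ck k : Set T) ⊆ C)
    (hCk_dense : C ⊆ closure (⋃ k, (Ck k : Set T)))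
    (Tr : T → ℝ≥0∞)
    (hTr_add : ∀ x y : T, x ∈ C → y ∈ C → 0 ≤ x → 0 ≤ y →
      Tr (x + y) = Tr x + Tr y)
    (hTr_hom : ∀ (c : ℝ) (x : T), 0 ≤ c → x ∈ C → 0 ≤ x →
      Tr (c • x) = ENNReal.ofReal c * Tr x)
    (hTr_lsc : LowerSemicontinuousOn Tr {x : T | x ∈ C ∧ 0 ≤ x})
    (hTr_tracial : ∀ x : T, x ∈ C → Tr (star x * x) = Tr (x * star x))
    (Nφ : Set T) (hNφ : Nφ = {x : T | Tr (E (star x * x)) = 0})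
    (hNφ_ideal : ∃ I : TwoSidedIdeal T, (I : Set T) = Nφ)
    (hCk_Nφ : ∀ k, {x : T | x ∈ Ck k ∧ 0 ≤ x} ∩ Nφ ⊆ (K : Set T)) :
    ∀ p : T, p ∈ C → IsSelfAdjoint p → p * p = p → Tr (E p) = 0 → p ∈ K := by
  intro p hpC hp_sa hp_idem hp_tr
  by_cases hTriv : Subsingleton T
  · have : p = (0 : T) := Subsingleton.elim _ _
    rw [this]; exact zero_mem K
  haveI : Nontrivial T := not_subsingleton_iff_nontrivial.mp hTriv
  letI : CStarAlgebra T := {}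
  obtain ⟨I, hI⟩ := hNφ_ideal
  -- p ∈ Nφ
  have hpN : p ∈ Nφ := by
    rw [hNφ]
    show Tr (E (star p * p)) = 0
    rwa [hp_sa.star_eq, hp_idem]
  -- ‖p‖ ≤ 1
  have hp1 : ‖p‖ ≤ 1 := by
    have h := CStarRing.norm_star_mul_self (x := p)
    rw [hp_sa.star_eq, hp_idem] at h
    nlinarith [norm_nonneg p]
  -- approximation by an element of some Ck
  have hclos : p ∈ closure (⋃ k, (Ck k : Set T)) := hCk_dense hpC
  rw [Metric.mem_closure_iff] at hclos
  obtain ⟨x, hxmem, hxd⟩ := hclos (1/26) (by norm_num)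
  rw [Set.mem_iUnion] at hxmem
  obtain ⟨k, hxk⟩ := hxmem
  have hpx : ‖p - x‖ < 1/26 := by rwa [dist_eq_norm] at hxd
  -- the selfadjoint average y
  set y : T := (2⁻¹ : ℂ) • (x + star x) with hy_def
  have hyk : y ∈ Ck k := SMulMemClass.smul_mem _ (add_mem hxk (star_mem hxk))
  have hy_sa : IsSelfAdjoint y := by
    rw [hy_def]
    simp only [IsSelfAdjoint, star_smul, star_add, star_star]
    rw [show (star (2⁻¹ : ℂ)) = (2⁻¹ : ℂ) by
      rw [star_inv₀]; norm_num [Complex.ext_iff], add_comm x (star x)]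
  have hpy : ‖p - y‖ ≤ 1/26 := by
    have hrw : p - y = (2⁻¹ : ℂ) • ((p - x) + star (p - x)) := by
      rw [hy_def, star_sub, hp_sa.star_eq]
      module
    rw [hrw]
    calc ‖(2⁻¹ : ℂ) • ((p - x) + star (p - x))‖
        = ‖(2⁻¹ : ℂ)‖ * ‖(p - x) + star (p - x)‖ := norm_smul _ _
      _ ≤ 2⁻¹ * (‖p - x‖ + ‖star (p - x)‖) := by
          rw [show ‖(2⁻¹ : ℂ)‖ = 2⁻¹ by norm_num]
          gcongr
          exact norm_add_le _ _
      _ = 2⁻¹ * (‖p - x‖ + ‖p - x‖) := by rw [norm_star]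
      _ ≤ 1/26 := by rw [← two_mul, ← mul_assoc]; norm_num; linarith
  -- spectrum control
  have hspec : ∀ t ∈ quasispectrum ℝ y, |t| < 1/3 ∨ |t - 1| < 1/3 := by
    intro t ht
    rw [quasispectrum_eq_spectrum_union_zero] at ht
    rcases ht with ht | ht
    · by_contra hcon
      push_neg at hcon
      obtain ⟨h1, h2⟩ := hcon
      exact (spectrum.mem_iff.mp ht) (aux_isUnit p y hp_idem hp1 hpy t h1 h2)
    · left
      simp only [Set.mem_singleton_iff] at ht
      rw [ht]; norm_num
  -- the bump function
  set f : ℝ → ℝ := fun t => min 1 (max 0 (3*t - 1)) with hf_def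
  have hf_cont : Continuous f := by
    apply Continuous.min continuous_const
    apply Continuous.max continuous_const
    fun_prop
  have hf0 : f 0 = 0 := by norm_num [hf_def]
  have hf_mem01 : ∀ t, 0 ≤ f t ∧ f t ≤ 1 := fun t =>
    ⟨le_min zero_le_one (le_max_left 0 _), min_le_left _ _⟩
  have hf_zero : ∀ t : ℝ, |t| < 1/3 → f t = 0 := by
    intro t ht
    rw [abs_lt] at ht
    have h : 3*t - 1 ≤ 0 := by linarith
    simp only [hf_def]
    rw [max_eq_left h, min_eq_right zero_le_one]
  have hf_one : ∀ t : ℝ, |t - 1| < 1/3 → f t = 1 := by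
    intro t ht
    rw [abs_lt] at ht
    have h : (1:ℝ) ≤ 3*t - 1 := by linarith
    simp only [hf_def]
    rw [max_eq_right (by linarith : (0:ℝ) ≤ 3*t - 1), min_eq_left h]
  -- the projection q
  set q : T := cfcₙ f y with hq_def
  have hk_closed : IsClosed ((Ck k : Set T)) := by
    haveI : FiniteDimensional ℂ ((Ck k).toNonUnitalSubalgebra.toSubmodule) := hCk_fd k
    exact Submodule.closed_of_finiteDimensional ((Ck k).toNonUnitalSubalgebra.toSubmodule)
  have hqk : q ∈ Ck k := aux_cfcn_mem_closed (Ck k) hk_closed hy_sa hyk f hf_cont hf0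
  have hq_idem : q * q = q := by
    rw [hq_def, ← cfcₙ_mul f f y (hf_cont.continuousOn) hf0 (hf_cont.continuousOn) hf0]
    apply cfcₙ_congr
    intro t ht
    rcases hspec t ht with h | h
    · simp [hf_zero t h]
    · simp [hf_one t h]
  have hq_nonneg : (0 : T) ≤ q := cfcₙ_nonneg fun t _ => (hf_mem01 t).1
  have hq_norm : ‖q‖ ≤ 1 := norm_cfcₙ_le fun t _ => by
    rw [Real.norm_eq_abs, abs_of_nonneg (hf_mem01 t).1]
    exact (hf_mem01 t).2
  have hyq : ‖y - q‖ ≤ 1/3 := by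
    have h1 : y - q = cfcₙ (fun t : ℝ => t - f t) y := by
      rw [hq_def, cfcₙ_sub (fun t : ℝ => t) f y continuousOn_id rfl hf_cont.continuousOn hf0,
        cfcₙ_id' ℝ y]
    rw [h1]
    apply norm_cfcₙ_le
    intro t ht
    rw [Real.norm_eq_abs]
    rcases hspec t ht with h | h
    · rw [hf_zero t h, sub_zero]; exact le_of_lt h
    · rw [hf_one t h]; exact le_of_lt h
  have hpq : ‖p - q‖ ≤ 1/26 + 1/3 := by
    calc ‖p - q‖ = ‖(p - y) + (y - q)‖ := by abel_nf
      _ ≤ ‖p - y‖ + ‖y - q‖ := norm_add_le _ _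
      _ ≤ 1/26 + 1/3 := add_le_add hpy hyq
  -- the intertwiner z
  set z : T := q * p + (1 - q) * (1 - p) with hz_def
  have hz1 : z - 1 = (q - p) * p + q * (p - q) := by
    have h : (q - p) * p + q * (p - q) = q * p + q * p - p * p - q * q := by noncomm_ring
    rw [h, hp_idem, hq_idem, hz_def]
    noncomm_ring
  have hz_norm : ‖1 - z‖ < 1 := by
    rw [norm_sub_rev, hz1]
    calc ‖(q - p) * p + q * (p - q)‖
        ≤ ‖(q - p) * p‖ + ‖q * (p - q)‖ := norm_add_le _ _
      _ ≤ ‖q - p‖ * ‖p‖ + ‖q‖ * ‖p - q‖ := add_le_add (norm_mul_le _ _) (norm_mul_le _ _)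
      _ ≤ (1/26 + 1/3) * 1 + 1 * (1/26 + 1/3) := by
          rw [norm_sub_rev q p]
          gcongr <;> first | exact hpq | exact hp1 | exact hq_norm |
            exact norm_nonneg _
      _ < 1 := by norm_num
  set W : Tˣ := Units.oneSub (1 - z) hz_norm with hW
  have hWz : (W : T) = z := by
    show 1 - (1 - z) = z
    abel
  have hzp : z * p = q * z := by
    have e1 : z * p = q * (p * p) + (1 - q) * (p - p * p) := by rw [hz_def]; noncomm_ring
    have e2 : q * z = (q * q) * p + (q - q * q) * (1 - p) := by rw [hz_def]; noncomm_ring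
    rw [e1, e2, hp_idem, hq_idem, sub_self, sub_self, mul_zero, zero_mul, add_zero]
  -- q ∈ Nφ via the ideal I
  have hq_eq : q = z * (p * (↑W⁻¹ : T)) := by
    have h1 : q = q * z * (↑W⁻¹ : T) := by
      conv_lhs => rw [← mul_one q, ← Units.mul_inv W, hWz, ← mul_assoc]
    rw [h1, ← hzp, mul_assoc]
  have hpI : p ∈ I := by
    have : p ∈ (I : Set T) := by rw [hI]; exact hpN
    exact this
  have hqN : q ∈ Nφ := by
    rw [← hI]
    show q ∈ I
    rw [hq_eq]
    exact I.mul_mem_left _ _ (I.mul_mem_right _ _ hpI)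
  have hqK : q ∈ K := hCk_Nφ k ⟨⟨hqk, hq_nonneg⟩, hqN⟩
  -- conclude
  have hp_eq : p = (↑W⁻¹ : T) * (q * z) := by
    rw [← hzp, ← mul_assoc, ← hWz, Units.inv_mul, one_mul]
  rw [hp_eq]
  exact K.mul_mem_left _ _ (K.mul_mem_right _ _ hqK)
end

section
/- Let A be a unital C*-algebra, σ : ℝ → Aut(A) a one-parameter group of *-automorphisms (σ_{s+t} = σ_s ∘ σ_t, σ_0 = id) with t ↦ σ_t(x) norm-continuous for every x ∈ A, let β > 0, and let φ be a KMS_β state for (A, σ): φ is a state on A, and for all x, y ∈ A there is a bounded continuous function F on the closed strip {z ∈ ℂ : 0 ≤ Im z ≤ β}, holomorphic on the open strip {z : 0 < Im z < β}, with F(t) = φ(x·σ_t(y)) and F(t + iβ) = φ(σ_t(y)·x) for all t ∈ ℝ. Then the set N_φ = {x ∈ A : φ(x*x) = 0} is a closed two-sided ideal of A. -/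
open ComplexOrder

section AuxStrip

open Complex Set Filter Topology


lemma strip_vanish {β : ℝ} (hβ : 0 < β) {F : ℂ → ℂ} {M : ℝ}
    (hcont : ContinuousOn F {z : ℂ | 0 ≤ z.im ∧ z.im ≤ β})
    (hbdd : ∀ z : ℂ, 0 ≤ z.im → z.im ≤ β → ‖F z‖ ≤ M)
    (hdiff : DifferentiableOn ℂ F {z : ℂ | 0 < z.im ∧ z.im < β})
    (hzero : ∀ u : ℝ, F (u : ℂ) = 0) :
    F ((β : ℂ) * Complex.I) = 0 := by
  have hM0 : 0 ≤ M := le_trans (norm_nonneg (F 0)) (hbdd 0 (by simp) (by simp [hβ.le]))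
  have hSeq : (Complex.im ⁻¹' Set.Ioo 0 β) = {z : ℂ | 0 < z.im ∧ z.im < β} := rfl
  have hsub : closure (Complex.im ⁻¹' Set.Ioo 0 β) ⊆ {z : ℂ | 0 ≤ z.im ∧ z.im ≤ β} := by
    refine (Complex.continuous_im.closure_preimage_subset _).trans ?_
    rw [closure_Ioo hβ.ne]
    exact fun z hz => ⟨hz.1, hz.2⟩
  -- interior vanishing
  have key : ∀ z : ℂ, 0 ≤ z.im → z.im < β → F z = 0 := by
    intro z hz0 hzb
    have hb : ∀ n : ℕ, ‖F z‖ ≤ M * Real.exp ((z.im - β) * n) := by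
      intro n
      set g : ℂ → ℂ := fun w => F w * Complex.exp ((n : ℂ) * Complex.I * w) with hg
      have hnorm : ∀ w : ℂ, ‖g w‖ = ‖F w‖ * Real.exp (-(n * w.im)) := by
        intro w
        rw [hg]
        have hre : ((n : ℂ) * Complex.I * w).re = -(n * w.im) := by
          simp [Complex.mul_re, Complex.mul_im]
        simp only [norm_mul, Complex.norm_exp, hre]
      have hPL : ‖g z‖ ≤ M * Real.exp (-(n * β)) := by
        refine PhragmenLindelof.horizontal_strip (a := 0) (b := β)
          (f := g) (C := M * Real.exp (-(n * β))) ?_ ?_ ?_ ?_ hz0 hzb.le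
        · constructor
          · refine DifferentiableOn.mul (hSeq ▸ hdiff) ?_
            exact (Complex.differentiable_exp.comp ((differentiable_const _).mul
              differentiable_id)).differentiableOn
          · refine ContinuousOn.mul (hcont.mono hsub) ?_
            exact (Complex.continuous_exp.comp (continuous_const.mul continuous_id)).continuousOn
        · refine ⟨0, by rw [sub_zero]; exact div_pos Real.pi_pos hβ, 0, ?_⟩
          refine Asymptotics.IsBigO.of_bound M ?_
          refine Filter.eventually_inf_principal.mpr (Filter.Eventually.of_forall fun w hw => ?_)
          have hw' : 0 < w.im ∧ w.im < β := hw
          have h1 : ‖F w‖ ≤ M := hbdd w hw'.1.le hw'.2.le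
          have h2 : Real.exp (-(n * w.im)) ≤ 1 := by
            rw [Real.exp_le_one_iff]
            exact neg_nonpos.mpr (mul_nonneg (Nat.cast_nonneg n) hw'.1.le)
          rw [hnorm w]
          have he : (0:ℝ) * Real.exp (0 * |w.re|) = 0 := by ring
          rw [he, Real.exp_zero, norm_one, mul_one]
          calc ‖F w‖ * Real.exp (-(n * w.im)) ≤ M * 1 :=
                mul_le_mul h1 h2 (Real.exp_pos _).le hM0
            _ = M := mul_one M
        · intro w hw
          have hw0 : w = (w.re : ℂ) := by
            apply Complex.ext <;> simp [hw]
          have : F w = 0 := by rw [hw0]; exact hzero w.re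
          rw [hnorm w, this]
          simp only [norm_zero, zero_mul]
          positivity
        · intro w hw
          rw [hnorm w, hw]
          exact mul_le_mul_of_nonneg_right (hbdd w (by rw [hw]; exact hβ.le) (by rw [hw]))
            (Real.exp_pos _).le
      rw [hnorm z] at hPL
      calc ‖F z‖ = ‖F z‖ * Real.exp (-(n * z.im)) * Real.exp ((n:ℝ) * z.im) := by
            rw [mul_assoc, ← Real.exp_add]; simp
        _ ≤ M * Real.exp (-(n * β)) * Real.exp ((n:ℝ) * z.im) :=
            mul_le_mul_of_nonneg_right hPL (Real.exp_pos _).le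
        _ = M * Real.exp ((z.im - β) * n) := by
            rw [mul_assoc, ← Real.exp_add]; ring_nf
    have hlim : Filter.Tendsto (fun n : ℕ => M * Real.exp ((z.im - β) * n)) atTop (nhds 0) := by
      rw [show (0:ℝ) = M * 0 by ring]
      refine Filter.Tendsto.const_mul M ?_
      refine Real.tendsto_exp_atBot.comp ?_
      exact (tendsto_const_mul_atBot_of_neg
        (show z.im - β < 0 by linarith)).mpr tendsto_natCast_atTop_atTop
    have : ‖F z‖ ≤ 0 := ge_of_tendsto hlim (Filter.Eventually.of_forall hb)
    exact norm_le_zero_iff.mp this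
  -- boundary
  have hmem : (β : ℂ) * Complex.I ∈ {z : ℂ | 0 ≤ z.im ∧ z.im ≤ β} := by
    constructor <;> simp [hβ.le]
  haveI : (nhdsWithin (β : ℝ) (Set.Ico 0 β)).NeBot := by
    rw [← mem_closure_iff_nhdsWithin_neBot, closure_Ico hβ.ne, Set.mem_Icc]
    exact ⟨hβ.le, le_refl _⟩
  have hpath : Filter.Tendsto (fun y : ℝ => (y : ℂ) * Complex.I)
      (nhdsWithin β (Set.Ico 0 β)) (nhdsWithin ((β:ℂ) * Complex.I) {z : ℂ | 0 ≤ z.im ∧ z.im ≤ β}) := by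
    apply tendsto_nhdsWithin_of_tendsto_nhds_of_eventually_within
    · exact ((Complex.continuous_ofReal.mul continuous_const).tendsto β).mono_left nhdsWithin_le_nhds
    · filter_upwards [self_mem_nhdsWithin] with y hy
      exact ⟨by simp [hy.1], by simp [hy.2.le]⟩
  have h1 : Filter.Tendsto (fun y : ℝ => F ((y : ℂ) * Complex.I))
      (nhdsWithin β (Set.Ico 0 β)) (nhds (F ((β:ℂ) * Complex.I))) :=
    ((hcont _ hmem).tendsto).comp hpath
  have h2 : Filter.Tendsto (fun y : ℝ => F ((y : ℂ) * Complex.I))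
      (nhdsWithin β (Set.Ico 0 β)) (nhds 0) := by
    refine Filter.Tendsto.congr' ?_ tendsto_const_nhds
    filter_upwards [self_mem_nhdsWithin] with y hy
    exact (key ((y:ℂ) * Complex.I) (by simp [hy.1]) (by simp [hy.2])).symm
  exact tendsto_nhds_unique h1 h2

end AuxStrip

/-- Let `A` be a unital C*-algebra, `σ : ℝ → Aut(A)` a strongly continuous
one-parameter group of *-automorphisms, `β > 0`, and `φ` a KMS_β state for `(A, σ)`: a state
such that for all `x, y ∈ A` there is a bounded continuous function `F` on the closed strip
`0 ≤ Im z ≤ β`, holomorphic on the open strip, with `F(t) = φ(x σ_t(y))` and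
`F(t + iβ) = φ(σ_t(y) x)` for real `t`. Then `N_φ = {x | φ(x*x) = 0}` is a closed two-sided
ideal of `A`. -/
theorem statement3
    {A : Type*} [NormedRing A] [StarRing A] [CStarRing A]
    [NormedAlgebra ℂ A] [StarModule ℂ A] [CompleteSpace A]
    (σ : ℝ → (A ≃⋆ₐ[ℂ] A))
    (hσ_zero : ∀ x : A, σ 0 x = x)
    (hσ_add : ∀ (s u : ℝ) (x : A), σ (s + u) x = σ s (σ u x))
    (hσ_cont : ∀ x : A, Continuous fun u : ℝ => σ u x)
    (β : ℝ) (hβ : 0 < β)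
    (φ : A →ₗ[ℂ] ℂ)
    (hφ_pos : ∀ x : A, 0 ≤ φ (star x * x))
    (hφ_one : φ 1 = 1)
    (hKMS : ∀ x y : A, ∃ F : ℂ → ℂ,
      ContinuousOn F {z : ℂ | 0 ≤ z.im ∧ z.im ≤ β} ∧
      (∃ M : ℝ, ∀ z : ℂ, 0 ≤ z.im → z.im ≤ β → ‖F z‖ ≤ M) ∧
      DifferentiableOn ℂ F {z : ℂ | 0 < z.im ∧ z.im < β} ∧
      (∀ u : ℝ, F (u : ℂ) = φ (x * σ u y)) ∧
      (∀ u : ℝ, F ((u : ℂ) + (β : ℂ) * Complex.I) = φ (σ u y * x))) :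
    IsClosed {x : A | φ (star x * x) = 0} ∧
      ∃ I : TwoSidedIdeal A, (I : Set A) = {x : A | φ (star x * x) = 0} := by

  letI : CStarAlgebra A := ⟨⟩
  letI : PartialOrder A := CStarAlgebra.spectralOrder A
  haveI : StarOrderedRing A := CStarAlgebra.spectralOrderedRing A
  -- reality facts
  have him : ∀ z : A, (φ (star z * z)).im = 0 := by
    intro z
    have := hφ_pos z
    rw [Complex.le_def] at this
    simpa using this.2.symm
  have hre : ∀ z : A, 0 ≤ (φ (star z * z)).re := by
    intro z
    have := hφ_pos z
    rw [Complex.le_def] at this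
    simpa using this.1
  have hreal : ∀ z : A, (starRingEnd ℂ) (φ (star z * z)) = φ (star z * z) := fun z =>
    Complex.conj_eq_iff_im.mpr (him z)
  -- expansion
  have hexpand : ∀ (l : ℂ) (x y : A), φ (star (x + l • y) * (x + l • y)) =
      φ (star x * x) + l * φ (star x * y) + (starRingEnd ℂ) l * φ (star y * x) +
        ((starRingEnd ℂ) l * l) * φ (star y * y) := by
    intro l x y
    have h : star (x + l • y) * (x + l • y) = star x * x + l • (star x * y) +
        (starRingEnd ℂ) l • (star y * x) + ((starRingEnd ℂ) l * l) • (star y * y) := by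
      simp only [star_add, star_smul, add_mul, mul_add, smul_add, smul_mul_assoc,
        mul_smul_comm, smul_smul, starRingEnd_apply, mul_comm]
      abel
    rw [h, map_add, map_add, map_add, map_smul, map_smul, map_smul]
    simp [smul_eq_mul]
  -- hermitian symmetry
  have hsym : ∀ x y : A, (starRingEnd ℂ) (φ (star y * x)) = φ (star x * y) := by
    intro x y
    have h1 := hreal (x + (1:ℂ) • y)
    rw [hexpand] at h1
    simp only [map_add, map_mul, map_one, one_mul, mul_one, Complex.conj_conj,
      hreal x, hreal y] at h1
    have h2 := hreal (x + Complex.I • y)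
    rw [hexpand] at h2
    simp only [map_add, map_mul, map_neg, Complex.conj_conj, Complex.conj_I, hreal x,
      hreal y, neg_neg] at h2
    set p := φ (star x * y)
    set q := φ (star y * x)
    have hcq : (starRingEnd ℂ) q = p := by
      have e1 : (starRingEnd ℂ) p + (starRingEnd ℂ) q = p + q := by linear_combination h1
      have e2 : -((starRingEnd ℂ) p) + (starRingEnd ℂ) q = p - q := by
        linear_combination (-Complex.I) * h2 -
          ((starRingEnd ℂ) p - (starRingEnd ℂ) q + p - q) * Complex.I_mul_I
      linear_combination (e1 + e2) / 2
    exact hcq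
  -- Cauchy–Schwarz via PreInnerProductSpace.Core
  letI Core : PreInnerProductSpace.Core ℂ A :=
    { inner := fun x y => φ (star x * y)
      conj_inner_symm := fun x y => hsym x y
      re_inner_nonneg := fun x => hre x
      add_left := fun x y z => by simp [star_add, add_mul, map_add]
      smul_left := fun x y r => by
        simp only [star_smul, smul_mul_assoc, map_smul, smul_eq_mul, starRingEnd_apply] }
  have CS : ∀ x y : A, ‖φ (star x * y)‖ * ‖φ (star y * x)‖ ≤
      (φ (star x * x)).re * (φ (star y * y)).re := fun x y =>
    InnerProductSpace.Core.inner_mul_inner_self_le (𝕜 := ℂ) (c := Core) x y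
  -- monotonicity
  have hmono : ∀ a : A, 0 ≤ a → 0 ≤ φ a := by
    intro a ha
    rw [StarOrderedRing.nonneg_iff] at ha
    refine AddSubmonoid.closure_induction (fun s hs => ?_) (by simp) (fun s u _ _ h1 h2 => ?_) ha
    · obtain ⟨c, rfl⟩ := hs
      exact hφ_pos c
    · rw [map_add]; exact add_nonneg h1 h2
  -- algebraMap computation
  have halg : ∀ r : ℝ, φ (algebraMap ℝ A r) = (r : ℂ) := by
    intro r
    rw [IsScalarTower.algebraMap_apply ℝ ℂ A, Algebra.algebraMap_eq_smul_one, map_smul,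
      hφ_one]
    simp
  have hnormsq : ∀ y : A, (φ (star y * y)).re ≤ ‖y‖ ^ 2 := by
    intro y
    have h1 : star y * y ≤ algebraMap ℝ A (‖y‖ ^ 2) := CStarAlgebra.star_mul_le_algebraMap_norm_sq
    have h2 : 0 ≤ φ (algebraMap ℝ A (‖y‖ ^ 2) - star y * y) := hmono _ (sub_nonneg.mpr h1)
    rw [map_sub, halg, Complex.le_def] at h2
    simpa [← Complex.ofReal_pow] using h2.1
  -- boundedness of φ
  have hstar_norm : ∀ y : A, ‖φ (star y)‖ = ‖φ y‖ := by
    intro y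
    have h := hsym (1:A) y
    rw [star_one, one_mul, mul_one] at h
    rw [← h, RCLike.norm_conj]
  have hbound : ∀ y : A, ‖φ y‖ ≤ ‖y‖ := by
    intro y
    have h1 := CS 1 y
    simp only [star_one, one_mul, mul_one, hφ_one, Complex.one_re, hstar_norm y] at h1
    have h2 := hnormsq y
    nlinarith [norm_nonneg (φ y), norm_nonneg y]
  -- the set N
  set N := {x : A | φ (star x * x) = 0} with hN
  have hclosed : IsClosed N := by
    have hφc : Continuous φ := (φ.mkContinuous 1 (fun x => by simpa using hbound x)).continuous
    have hc : Continuous fun x : A => φ (star x * x) :=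
      hφc.comp (continuous_star.mul continuous_id)
    have : N = (fun x : A => φ (star x * x)) ⁻¹' {0} := by ext z; simp [hN]
    rw [this]
    exact isClosed_singleton.preimage hc
  -- degenerate Cauchy-Schwarz
  have hCS0 : ∀ x, x ∈ N → ∀ y : A, φ (star x * y) = 0 := by
    intro x hx y
    have h := CS x y
    rw [Set.mem_setOf_eq] at hx
    rw [hx] at h
    simp only [Complex.zero_re, zero_mul] at h
    have h2 : ‖φ (star y * x)‖ = ‖φ (star x * y)‖ := by
      rw [← hsym x y, RCLike.norm_conj]
    rw [h2] at h
    have h3 : ‖φ (star x * y)‖ = 0 := by nlinarith [norm_nonneg (φ (star x * y))]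
    exact norm_eq_zero.mp h3
  have hCS0' : ∀ x, x ∈ N → ∀ y : A, φ (star y * x) = 0 := by
    intro x hx y
    have h := hsym x y
    rw [hCS0 x hx y] at h
    rw [starRingEnd_apply] at h
    exact star_eq_zero.mp h
  -- membership facts
  have hzero_mem : (0:A) ∈ N := by simp [hN]
  have hadd : ∀ {x y : A}, x ∈ N → y ∈ N → x + y ∈ N := by
    intro x y hx hy
    have hexp : star (x + y) * (x + y)
        = star x * x + star x * y + (star y * x + star y * y) := by
      rw [star_add, add_mul, mul_add, mul_add]
    rw [Set.mem_setOf_eq, hexp, map_add, map_add, map_add, Set.mem_setOf_eq.mp hx,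
      Set.mem_setOf_eq.mp hy, hCS0 x hx y, hCS0' x hx y]
    ring
  have hneg : ∀ {x : A}, x ∈ N → -x ∈ N := by
    intro x hx
    rw [Set.mem_setOf_eq, star_neg, neg_mul_neg]
    exact hx
  have hmull : ∀ {a x : A}, x ∈ N → a * x ∈ N := by
    intro a x hx
    have h1 : star a * a ≤ algebraMap ℝ A (‖a‖ ^ 2) :=
      CStarAlgebra.star_mul_le_algebraMap_norm_sq
    have h2 : (0:A) ≤ star x * (algebraMap ℝ A (‖a‖ ^ 2) - star a * a) * x :=
      star_left_conjugate_nonneg (sub_nonneg.mpr h1) x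
    have h4 : star x * (algebraMap ℝ A (‖a‖ ^ 2) - star a * a) * x
        = ((‖a‖ ^ 2 : ℝ) : ℂ) • (star x * x) - star (a * x) * (a * x) := by
      rw [star_mul, IsScalarTower.algebraMap_apply ℝ ℂ A, Algebra.algebraMap_eq_smul_one]
      simp only [mul_sub, sub_mul, mul_smul_comm, mul_one, smul_mul_assoc, mul_assoc,
        Complex.coe_algebraMap]
    have h5 := hmono _ h2
    rw [h4, map_sub, map_smul, Set.mem_setOf_eq.mp hx, smul_zero, zero_sub] at h5
    have h6 : φ (star (a * x) * (a * x)) ≤ 0 := by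
      rwa [← neg_nonneg]
    exact le_antisymm h6 (hφ_pos _)
  -- star-closedness via the KMS condition
  have hstar_mem : ∀ x, x ∈ N → star x ∈ N := by
    intro x hx
    obtain ⟨F, hc, ⟨M, hM⟩, hd, hF0, hFβ⟩ := hKMS (star x) x
    have hzero : ∀ u : ℝ, F (u : ℂ) = 0 := fun u => by
      rw [hF0 u]; exact hCS0 x hx (σ u x)
    have hv := strip_vanish hβ hc hM hd hzero
    have h2 := hFβ 0
    rw [Complex.ofReal_zero, zero_add, hσ_zero] at h2
    rw [Set.mem_setOf_eq, star_star, ← h2, hv]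
  have hmulr : ∀ {x a : A}, x ∈ N → x * a ∈ N := by
    intro x a hx
    have h1 := hstar_mem x hx
    have h2 : star a * star x ∈ N := hmull h1
    have h3 := hstar_mem _ h2
    rw [star_mul, star_star, star_star] at h3
    exact h3
  refine ⟨hclosed, ⟨TwoSidedIdeal.mk' N hzero_mem hadd hneg (fun {a y} h => hmull h)
    (fun {y a} h => hmulr h), ?_⟩⟩
  exact TwoSidedIdeal.coe_mk' N hzero_mem hadd hneg _ _
end

section
/- Fix a real number a ≥ 1, and define sequences p, q : ℕ → ℝ by p(0) = q(0) = 1 and, for n ≥ 1, p(n) = a² · Σ_{k=0}^{n−1} q(k)·p(n−1−k) and q(n) = a^{−2} · Σ_{k=0}^{n−1} p(k)·q(n−1−k). Then for every n ∈ ℕ, ∫_{(a−1/a)²}^{(a+1/a)²} xⁿ · √(4a²x − (a⁴ − 1 − a²x)²)/(2πx) dx = p(n). In particular (taking n = 0), the function x ↦ √(4a²x − (a⁴ − 1 − a²x)²)/(2πx) is a probability density supported on the interval [(a−1/a)², (a+1/a)²] (note that the radicand 4a²x − (a⁴ − 1 − a²x)² is nonnegative exactly on this interval). -/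
open Real intervalIntegral

noncomputable def rad (a x : ℝ) : ℝ := 4*a^2*x - (a^4 - 1 - a^2*x)^2
noncomputable def al (a : ℝ) : ℝ := (a - 1/a)^2
noncomputable def be (a : ℝ) : ℝ := (a + 1/a)^2

lemma rad_eq {a : ℝ} (ha : 1 ≤ a) (x : ℝ) :
    rad a x = a^4 * ((be a - x) * (x - al a)) := by
  have h0 : a ≠ 0 := by positivity
  unfold rad al be
  field_simp
  ring

lemma al_nonneg (a : ℝ) : 0 ≤ al a := sq_nonneg _

lemma be_sub_al {a : ℝ} (ha : 1 ≤ a) : be a = al a + 4 := by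
  have h0 : a ≠ 0 := by positivity
  unfold al be; field_simp; ring

lemma al_le_be {a : ℝ} (ha : 1 ≤ a) : al a ≤ be a := by rw [be_sub_al ha]; linarith

lemma rad_al {a : ℝ} (ha : 1 ≤ a) : rad a (al a) = 0 := by rw [rad_eq ha]; ring
lemma rad_be {a : ℝ} (ha : 1 ≤ a) : rad a (be a) = 0 := by rw [rad_eq ha]; ring

lemma rad_pos {a x : ℝ} (ha : 1 ≤ a) (hx : x ∈ Set.Ioo (al a) (be a)) : 0 < rad a x := by
  rw [rad_eq ha]
  have h1 : 0 < a ^ 4 := by positivity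
  obtain ⟨hxa, hxb⟩ := hx
  have := mul_pos (sub_pos.2 hxb) (sub_pos.2 hxa)
  nlinarith

lemma rad_nonneg_iff {a : ℝ} (ha : 1 ≤ a) (x : ℝ) :
    0 ≤ rad a x ↔ x ∈ Set.Icc (al a) (be a) := by
  rw [rad_eq ha]
  have h4 : be a = al a + 4 := be_sub_al ha
  have h1 : (0:ℝ) < a ^ 4 := by positivity
  constructor
  · intro h
    have h2 : 0 ≤ (be a - x) * (x - al a) := nonneg_of_mul_nonneg_right ?_ h1
    · constructor <;> nlinarith
    · nlinarith
  · rintro ⟨h2, h3⟩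
    have : 0 ≤ (be a - x) * (x - al a) := mul_nonneg (by linarith) (by linarith)
    positivity

noncomputable def Sint (a : ℝ) (k : ℕ) : ℝ :=
  ∫ x in al a..be a, x ^ k * Real.sqrt (rad a x)

lemma cont_rad (a : ℝ) : Continuous (rad a) := by unfold rad; continuity

lemma cont_sqrt_rad (a : ℝ) : Continuous (fun x => Real.sqrt (rad a x)) :=
  Real.continuous_sqrt.comp (cont_rad a)

lemma hasDerivAt_rad (a x : ℝ) :
    HasDerivAt (rad a) (-2*a^4*x + 2*a^2*(a^4+1)) x := by
  have h2 : HasDerivAt (fun y : ℝ => a^4 - 1 - a^2*y) (-a^2) x := by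
    simpa using ((hasDerivAt_id x).const_mul (a^2)).const_sub (a^4-1)
  have h3 := h2.pow 2
  have h4 : HasDerivAt (fun y : ℝ => 4*a^2*y) (4*a^2) x := by
    simpa using (hasDerivAt_id x).const_mul (4*a^2)
  have h5 := h4.sub h3
  have h1 : HasDerivAt (fun x : ℝ => 4*a^2*x - (a^4 - 1 - a^2*x)^2)
      (-2*a^4*x + 2*a^2*(a^4+1)) x := by
    refine h5.congr_deriv ?_
    symm
    push_cast
    ring
  exact h1

lemma srec (a : ℝ) (ha : 1 ≤ a) (k : ℕ) :
    a^4*((k:ℝ)+3) * Sint a (k+1)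
      = a^2*(a^4+1)*(2*(k:ℝ)+3) * Sint a k - (k:ℝ)*(a^4-1)^2 * Sint a (k-1) := by
  set D : ℝ → ℝ := fun x => -2*a^4*x + 2*a^2*(a^4+1) with hD
  set g : ℝ → ℝ := fun x => x ^ k * (rad a x * Real.sqrt (rad a x)) with hg
  set g' : ℝ → ℝ := fun x =>
    (-(a^4)*((k:ℝ)+3)) * (x^(k+1) * Real.sqrt (rad a x))
    + (a^2*(a^4+1)*(2*(k:ℝ)+3)) * (x^k * Real.sqrt (rad a x))
    + (-(k:ℝ)*(a^4-1)^2) * (x^(k-1) * Real.sqrt (rad a x)) with hg2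
  have hderiv : ∀ x ∈ Set.Ioo (al a) (be a), HasDerivAt g (g' x) x := by
    intro x hx
    have hpos := rad_pos ha hx
    have hs0 : Real.sqrt (rad a x) ≠ 0 := by positivity
    have hss : Real.sqrt (rad a x) * Real.sqrt (rad a x) = rad a x :=
      Real.mul_self_sqrt hpos.le
    have hsq : HasDerivAt (fun x => Real.sqrt (rad a x))
        (1/(2 * Real.sqrt (rad a x)) * D x) x :=
      (Real.hasDerivAt_sqrt hpos.ne').comp x (hasDerivAt_rad a x)
    have hmul : HasDerivAt (fun x => rad a x * Real.sqrt (rad a x))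
        (D x * Real.sqrt (rad a x)
          + rad a x * (1/(2 * Real.sqrt (rad a x)) * D x)) x :=
      (hasDerivAt_rad a x).mul hsq
    have hfull := (hasDerivAt_pow k x).mul hmul
    have hc : rad a x * (1/(2 * Real.sqrt (rad a x)) * D x)
        = D x / 2 * Real.sqrt (rad a x) := by
      field_simp
      linear_combination (-D x) * hss
    rw [hc] at hfull
    refine hfull.congr_deriv ?_
    symm
    have hradx : rad a x = 4*a^2*x - (a^4 - 1 - a^2*x)^2 := rfl
    obtain rfl | ⟨j, rfl⟩ : k = 0 ∨ ∃ j, k = j+1 := by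
      rcases k with _ | j
      exacts [Or.inl rfl, Or.inr ⟨j, rfl⟩]
    · norm_num [hg2, hD]
      rw [hradx]; ring
    · simp only [hg2, hD, Nat.add_sub_cancel]
      push_cast
      rw [hradx]; ring
  have hcontg : ContinuousOn g (Set.Icc (al a) (be a)) := by
    apply Continuous.continuousOn
    exact (continuous_pow k).mul ((cont_rad a).mul (cont_sqrt_rad a))
  have hcontg2 : Continuous g' := by
    refine (Continuous.add (Continuous.add ?_ ?_) ?_)
    · exact continuous_const.mul ((continuous_pow (k+1)).mul (cont_sqrt_rad a))
    · exact continuous_const.mul ((continuous_pow k).mul (cont_sqrt_rad a))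
    · exact continuous_const.mul ((continuous_pow (k-1)).mul (cont_sqrt_rad a))
  have hftc := intervalIntegral.integral_eq_sub_of_hasDeriv_right_of_le (al_le_be ha)
    hcontg (fun x hx => (hderiv x hx).hasDerivWithinAt)
    (hcontg2.intervalIntegrable _ _)
  have hzero : (∫ x in al a..be a, g' x) = 0 := by
    rw [hftc, hg]
    simp [rad_al ha, rad_be ha]
  have hsplit : (∫ x in al a..be a, g' x)
      = (-(a^4)*((k:ℝ)+3)) * Sint a (k+1) + (a^2*(a^4+1)*(2*(k:ℝ)+3)) * Sint a k
        + (-(k:ℝ)*(a^4-1)^2) * Sint a (k-1) := by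
    rw [hg2]
    have i1 : IntervalIntegrable (fun x => x^(k+1) * Real.sqrt (rad a x))
        MeasureTheory.volume (al a) (be a) :=
      (((continuous_pow (k+1)).mul (cont_sqrt_rad a))).intervalIntegrable _ _
    have i2 : IntervalIntegrable (fun x => x^k * Real.sqrt (rad a x))
        MeasureTheory.volume (al a) (be a) :=
      (((continuous_pow k).mul (cont_sqrt_rad a))).intervalIntegrable _ _
    have i3 : IntervalIntegrable (fun x => x^(k-1) * Real.sqrt (rad a x))
        MeasureTheory.volume (al a) (be a) :=
      (((continuous_pow (k-1)).mul (cont_sqrt_rad a))).intervalIntegrable _ _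
    rw [intervalIntegral.integral_add (((i1.const_mul _).add (i2.const_mul _))) (i3.const_mul _),
      intervalIntegral.integral_add (i1.const_mul _) (i2.const_mul _),
      intervalIntegral.integral_const_mul, intervalIntegral.integral_const_mul,
      intervalIntegral.integral_const_mul]
    rfl
  rw [hsplit] at hzero
  linarith

section Szero

variable {a : ℝ}

lemma arg_deriv (a x : ℝ) :
    HasDerivAt (fun x : ℝ => (2*x - (al a + be a))/4) (1/2) x := by
  have h := (((hasDerivAt_id x).const_mul 2).sub_const (al a + be a)).div_const 4
  refine h.congr_deriv ?_
  symm
  norm_num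

lemma arg_mem {x : ℝ} (ha : 1 ≤ a) (hx : x ∈ Set.Ioo (al a) (be a)) :
    (2*x - (al a + be a))/4 ≠ -1 ∧ (2*x - (al a + be a))/4 ≠ 1 := by
  have hb := be_sub_al ha
  obtain ⟨h1, h2⟩ := hx
  constructor <;> intro h <;> rw [div_eq_iff (by norm_num : (4:ℝ) ≠ 0)] at h <;> linarith

lemma hpoly (ha : 1 ≤ a) (x : ℝ) :
    4*rad a x + a^4*(2*x - (al a + be a))^2 = 16*a^4 := by
  have h0 : a ≠ 0 := by positivity
  unfold rad al be
  field_simp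
  ring

lemma hkey1 {x : ℝ} (ha : 1 ≤ a) (hx : x ∈ Set.Ioo (al a) (be a)) :
    Real.sqrt (1 - ((2*x - (al a + be a))/4)^2) = Real.sqrt (rad a x) / (2*a^2) := by
  have h0 : a ≠ 0 := by positivity
  have hpos := rad_pos ha hx
  have h1 : 1 - ((2*x - (al a + be a))/4)^2 = rad a x / (2*a^2)^2 := by
    have := hpoly ha x
    field_simp
    linarith [hpoly ha x]
  rw [h1, Real.sqrt_div hpos.le, Real.sqrt_sq (by positivity)]

lemma arcsin_deriv {x : ℝ} (ha : 1 ≤ a) (hx : x ∈ Set.Ioo (al a) (be a)) :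
    HasDerivAt (fun x : ℝ => Real.arcsin ((2*x - (al a + be a))/4))
      (a^2 / Real.sqrt (rad a x)) x := by
  obtain ⟨hn1, hn2⟩ := arg_mem ha hx
  have hpos := rad_pos ha hx
  have hs0 : Real.sqrt (rad a x) ≠ 0 := by positivity
  have h := (Real.hasDerivAt_arcsin hn1 hn2).comp x (arg_deriv a x)
  rw [hkey1 ha hx] at h
  refine h.congr_deriv ?_
  symm
  have h0 : a ≠ 0 := by positivity
  field_simp

lemma hab2 (ha : 1 ≤ a) : a^4*(al a + be a) = 2*a^2*(a^4+1) := by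
  have h0 : a ≠ 0 := by positivity
  unfold al be; field_simp; ring

lemma S_zero (ha : 1 ≤ a) : Sint a 0 = 2 * Real.pi * a^2 := by
  set H : ℝ → ℝ := fun x => (2*x - (al a + be a))/4 * Real.sqrt (rad a x)
    + 2*a^2 * Real.arcsin ((2*x - (al a + be a))/4) with hH
  have hderiv : ∀ x ∈ Set.Ioo (al a) (be a),
      HasDerivAt H (Real.sqrt (rad a x)) x := by
    intro x hx
    have hpos := rad_pos ha hx
    have hs0 : Real.sqrt (rad a x) ≠ 0 := by positivity
    have hss : Real.sqrt (rad a x) * Real.sqrt (rad a x) = rad a x :=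
      Real.mul_self_sqrt hpos.le
    have hsq : HasDerivAt (fun x => Real.sqrt (rad a x))
        (1/(2 * Real.sqrt (rad a x)) * (-2*a^4*x + 2*a^2*(a^4+1))) x :=
      (Real.hasDerivAt_sqrt hpos.ne').comp x (hasDerivAt_rad a x)
    have h1 := (arg_deriv a x).mul hsq
    have h2 := (arcsin_deriv ha hx).const_mul (2*a^2)
    have h3 := h1.add h2
    refine h3.congr_deriv ?_
    symm
    have hp := hpoly ha x
    have hab := hab2 ha
    field_simp
    linear_combination 4*hss + hp + (2*x-(al a + be a))*hab
  have hcont : ContinuousOn H (Set.Icc (al a) (be a)) := by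
    apply Continuous.continuousOn
    apply Continuous.add
    · exact (by continuity : Continuous fun x : ℝ => (2*x - (al a + be a))/4).mul (cont_sqrt_rad a)
    · exact continuous_const.mul (Real.continuous_arcsin.comp (by continuity))
  have hftc := intervalIntegral.integral_eq_sub_of_hasDeriv_right_of_le (al_le_be ha)
    hcont (fun x hx => (hderiv x hx).hasDerivWithinAt)
    ((cont_sqrt_rad a).intervalIntegrable _ _)
  have hb := be_sub_al ha
  have hbe : (2*be a - (al a + be a))/4 = 1 := by rw [hb]; ring
  have hal : (2*al a - (al a + be a))/4 = -1 := by rw [hb]; ring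
  have hSint : Sint a 0 = ∫ x in al a..be a, Real.sqrt (rad a x) := by
    unfold Sint
    simp
  rw [hSint, hftc, hH]
  simp only [hbe, hal, rad_al ha, rad_be ha, Real.sqrt_zero, mul_zero,
    Real.arcsin_one, Real.arcsin_neg_one]
  ring

end Szero

noncomputable def ee (a : ℝ) : ℝ := a^2 - (a^2)⁻¹

section Mzero

variable {a : ℝ}

lemma a_ne (ha : 1 ≤ a) : a ≠ 0 := by positivity

lemma al_pos (ha : 1 < a) : 0 < al a := by
  have h0 : 0 < a := by linarith
  have h1 : 1/a < 1 := by rw [div_lt_one h0]; linarith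
  have : 0 < a - 1/a := by linarith
  unfold al; positivity

lemma e_nonneg (ha : 1 ≤ a) : 0 ≤ ee a := by
  have h1 : 1 ≤ a^2 := by nlinarith
  have h2 : (a^2)⁻¹ ≤ 1 := by
    rw [inv_le_one_iff₀]; right; exact h1
  unfold ee; linarith

lemma e_pos (ha : 1 < a) : 0 < ee a := by
  have h1 : 1 < a^2 := by nlinarith
  have h2 : (a^2)⁻¹ < 1 := by
    rw [inv_lt_one_iff₀]; right; exact h1
  unfold ee; linarith

lemma e_one : ee 1 = 0 := by unfold ee; norm_num

lemma ae_id (ha : 1 ≤ a) : a^2 * ee a = a^4 - 1 := by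
  have h0 := a_ne ha
  unfold ee; field_simp

lemma be_pos (ha : 1 ≤ a) : 0 < be a := by
  rw [be_sub_al ha]; have := al_nonneg a; linarith

lemma hgid (ha : 1 ≤ a) {x : ℝ} (hx0 : x ≠ 0) :
    (1 - ((al a + be a)/4 - (ee a)^2/2 * x⁻¹)^2) * (4*a^4*x^2)
      = (ee a)^2 * rad a x := by
  have h0 := a_ne ha
  unfold al be ee rad
  field_simp
  ring

lemma hgbe (ha : 1 ≤ a) : (al a + be a)/4 - (ee a)^2/2 * (be a)⁻¹ = 1 := by
  have h0 := a_ne ha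
  have hb := (be_pos ha).ne'
  unfold al be ee at *
  field_simp
  ring

lemma e_sq (ha : 1 ≤ a) : (ee a)^2 = al a * be a := by
  have h0 := a_ne ha
  unfold ee al be; field_simp; ring

lemma hgal (ha : 1 < a) : (al a + be a)/4 - (ee a)^2/2 * (al a)⁻¹ = -1 := by
  have hb := (al_pos ha).ne'
  rw [e_sq ha.le, be_sub_al ha.le]
  field_simp
  ring

lemma third_deriv (ha : 1 ≤ a) {x : ℝ} (hx : x ∈ Set.Ioo (al a) (be a)) :
    HasDerivAt (fun x : ℝ => a^2 * ee a * Real.arcsin ((al a + be a)/4 - (ee a)^2/2 * x⁻¹))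
      (a^4 * (ee a)^2 / (x * Real.sqrt (rad a x))) x := by
  rcases eq_or_lt_of_le ha with h1 | h1
  · have he : ee a = 0 := by rw [← h1]; exact e_one
    simp only [he, mul_zero, zero_mul]
    norm_num
    exact hasDerivAt_const x 0
  · have hal := al_pos h1
    have hx0 : 0 < x := lt_trans hal hx.1
    have hepos := e_pos h1
    have hpos := rad_pos ha hx
    have hs0 : Real.sqrt (rad a x) ≠ 0 := by positivity
    have hss : Real.sqrt (rad a x) * Real.sqrt (rad a x) = rad a x :=
      Real.mul_self_sqrt hpos.le
    have hgd := hgid ha hx0.ne'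
    set gv : ℝ := (al a + be a)/4 - (ee a)^2/2 * x⁻¹ with hgv
    have hsq_pos : 0 < 1 - gv^2 := by
      have hM : 0 < 4*a^4*x^2 := by positivity
      have hR : 0 < (ee a)^2 * rad a x := by positivity
      nlinarith
    have hne1 : gv ≠ -1 := by intro h; rw [h] at hsq_pos; norm_num at hsq_pos
    have hne2 : gv ≠ 1 := by intro h; rw [h] at hsq_pos; norm_num at hsq_pos
    have hinner : HasDerivAt (fun x : ℝ => (al a + be a)/4 - (ee a)^2/2 * x⁻¹)
        ((ee a)^2/2 * (x^2)⁻¹) x := by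
      have h := ((hasDerivAt_inv hx0.ne').const_mul ((ee a)^2/2)).const_sub ((al a + be a)/4)
      refine h.congr_deriv ?_
      symm
      field_simp
    have hkey2 : Real.sqrt (1 - gv^2) = ee a * Real.sqrt (rad a x) / (2*a^2*x) := by
      rw [show 1 - gv^2 = (ee a * Real.sqrt (rad a x) / (2*a^2*x))^2 from ?_,
        Real.sqrt_sq (by positivity)]
      have h4 : (ee a * Real.sqrt (rad a x) / (2*a^2*x))^2
          = (ee a)^2 * rad a x / (4*a^4*x^2) := by
        rw [div_pow, mul_pow, sq (Real.sqrt (rad a x)), hss]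
        ring_nf
      rw [h4, eq_div_iff (by positivity : (4*a^4*x^2 : ℝ) ≠ 0)]
      linarith [hgd]
    have h := ((Real.hasDerivAt_arcsin hne1 hne2).comp x hinner).const_mul (a^2 * ee a)
    rw [hkey2] at h
    refine h.congr_deriv ?_
    symm
    have h0 := a_ne ha
    field_simp
  
lemma sqrt_rad_div_x_integrable (ha : 1 ≤ a) :
    IntervalIntegrable (fun x => Real.sqrt (rad a x) / x)
      MeasureTheory.volume (al a) (be a) := by
  have hb : IntervalIntegrable (fun x : ℝ => a^2 * Real.sqrt (be a) * x ^ (-(1/2) : ℝ))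
      MeasureTheory.volume (al a) (be a) :=
    (intervalIntegrable_rpow' (by norm_num)).const_mul _
  apply hb.mono_fun
  · exact ((cont_sqrt_rad a).measurable.div measurable_id).aestronglyMeasurable
  · rw [Filter.EventuallyLE]
    filter_upwards [MeasureTheory.ae_restrict_mem measurableSet_uIoc] with x hx
    rw [Set.uIoc_of_le (al_le_be ha)] at hx
    have hx0 : 0 < x := lt_of_le_of_lt (al_nonneg a) hx.1
    have hrnn : 0 ≤ rad a x := by
      rw [rad_nonneg_iff ha]
      exact ⟨hx.1.le, hx.2⟩
    have hbnd : rad a x ≤ a^4 * be a * x := by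
      rw [rad_eq ha]
      have h1 : 0 ≤ x - al a := by linarith [hx.1]
      have h2 : 0 ≤ be a - x := by linarith [hx.2]
      have h3 : 0 ≤ al a := al_nonneg a
      have h4 : (0:ℝ) < a^4 := by positivity
      have h5 : (be a - x)*(x - al a) ≤ be a * x := by
        nlinarith [mul_nonneg h3 h2, sq_nonneg x]
      calc a^4 * ((be a - x)*(x - al a)) ≤ a^4 * (be a * x) :=
            mul_le_mul_of_nonneg_left h5 h4.le
        _ = a^4 * be a * x := by ring
    have hsb : Real.sqrt (rad a x) ≤ a^2 * Real.sqrt (be a) * Real.sqrt x := by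
      have := Real.sqrt_le_sqrt hbnd
      calc Real.sqrt (rad a x) ≤ Real.sqrt (a^4 * be a * x) := this
        _ = a^2 * Real.sqrt (be a) * Real.sqrt x := by
            rw [show a^4 * be a * x = (a^2 * Real.sqrt (be a) * Real.sqrt x)^2 by
                rw [mul_pow, mul_pow, Real.sq_sqrt (be_pos ha).le, Real.sq_sqrt hx0.le]; ring,
              Real.sqrt_sq (by positivity)]
    rw [Real.norm_eq_abs, abs_of_nonneg (div_nonneg (Real.sqrt_nonneg _) hx0.le)]
    have hxr : x ^ (-(1/2) : ℝ) = (Real.sqrt x)⁻¹ := by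
      rw [Real.rpow_neg hx0.le, ← Real.sqrt_eq_rpow]
    rw [Real.norm_eq_abs, abs_of_nonneg (by rw [hxr]; positivity), hxr]
    have hsx : (Real.sqrt x)⁻¹ = Real.sqrt x / x := by
      rw [Real.sqrt_div_self', one_div]
    rw [hsx]
    calc Real.sqrt (rad a x) / x ≤ (a^2 * Real.sqrt (be a) * Real.sqrt x) / x := by
          gcongr
      _ = a^2 * Real.sqrt (be a) * (Real.sqrt x / x) := by ring

lemma M_zero_int (ha : 1 ≤ a) :
    (∫ x in al a..be a, Real.sqrt (rad a x) / x) = 2 * Real.pi := by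
  set F : ℝ → ℝ := fun x => Real.sqrt (rad a x)
    + (a^4+1) * Real.arcsin ((2*x - (al a + be a))/4)
    - a^2 * ee a * Real.arcsin ((al a + be a)/4 - (ee a)^2/2 * x⁻¹) with hF
  have hfin : ∀ x : ℝ, x*(-2*a^4*x + 2*a^2*(a^4+1))/2 + a^2*(a^4+1)*x - a^4*(ee a)^2
      = rad a x := by
    intro x
    have h0 := a_ne ha
    unfold ee rad
    field_simp
    ring
  have hderiv : ∀ x ∈ Set.Ioo (al a) (be a),
      HasDerivAt F (Real.sqrt (rad a x) / x) x := by
    intro x hx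
    have hx0 : 0 < x := lt_of_le_of_lt (al_nonneg a) hx.1
    have hpos := rad_pos ha hx
    have hs0 : Real.sqrt (rad a x) ≠ 0 := by positivity
    have hss : Real.sqrt (rad a x) * Real.sqrt (rad a x) = rad a x :=
      Real.mul_self_sqrt hpos.le
    have h1 : HasDerivAt (fun x => Real.sqrt (rad a x))
        (1/(2 * Real.sqrt (rad a x)) * (-2*a^4*x + 2*a^2*(a^4+1))) x :=
      (Real.hasDerivAt_sqrt hpos.ne').comp x (hasDerivAt_rad a x)
    have h2 := (arcsin_deriv ha hx).const_mul (a^4+1)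
    have h3 := third_deriv ha hx
    have h4 := (h1.add h2).sub h3
    refine h4.congr_deriv ?_
    symm
    have hf := hfin x
    field_simp
    linear_combination hss - hf
  have hcont : ContinuousOn F (Set.Icc (al a) (be a)) := by
    apply ContinuousOn.sub
    · apply Continuous.continuousOn
      exact (cont_sqrt_rad a).add (continuous_const.mul
        (Real.continuous_arcsin.comp (by continuity)))
    · rcases eq_or_lt_of_le ha with h1 | h1
      · have he : ee a = 0 := by rw [← h1]; exact e_one
        have hz : (fun x : ℝ => a^2 * ee a
            * Real.arcsin ((al a + be a)/4 - (ee a)^2/2 * x⁻¹)) = fun _ => 0 := by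
          funext y; rw [he]; ring
        rw [hz]
        exact continuousOn_const
      · have hal := al_pos h1
        apply ContinuousOn.mul continuousOn_const
        apply Real.continuous_arcsin.comp_continuousOn
        apply ContinuousOn.sub continuousOn_const
        apply ContinuousOn.mul continuousOn_const
        apply ContinuousOn.inv₀ continuousOn_id
        intro y hy
        have : 0 < y := lt_of_lt_of_le hal hy.1
        exact this.ne'
  have hftc := intervalIntegral.integral_eq_sub_of_hasDeriv_right_of_le (al_le_be ha)
    hcont (fun x hx => (hderiv x hx).hasDerivWithinAt)
    (sqrt_rad_div_x_integrable ha)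
  rw [hftc, hF]
  have hb := be_sub_al ha
  have hbe1 : (2*be a - (al a + be a))/4 = 1 := by rw [hb]; ring
  have hal1 : (2*al a - (al a + be a))/4 = -1 := by rw [hb]; ring
  have hthird_be : a^2 * ee a
      * Real.arcsin ((al a + be a)/4 - (ee a)^2/2 * (be a)⁻¹) = a^2 * ee a * (Real.pi/2) := by
    rw [hgbe ha, Real.arcsin_one]
  have hthird_al : a^2 * ee a
      * Real.arcsin ((al a + be a)/4 - (ee a)^2/2 * (al a)⁻¹) = a^2 * ee a * (-(Real.pi/2)) := by
    rcases eq_or_lt_of_le ha with h1 | h1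
    · have he : ee a = 0 := by rw [← h1]; exact e_one
      rw [he]; ring
    · rw [hgal h1, Real.arcsin_neg_one]
  simp only [hbe1, hal1, rad_al ha, rad_be ha, Real.sqrt_zero,
    Real.arcsin_one, Real.arcsin_neg_one]
  rw [hthird_be, hthird_al]
  have hae := ae_id ha
  nlinarith [hae, Real.pi_pos]

end Mzero

open PowerSeries in
lemma holonomic (b : ℝ) (p : ℕ → ℝ) (h0 : p 0 = 1)
    (hstar : ∀ n : ℕ, 1 ≤ n →
      ∑ k ∈ Finset.range n, p k * p (n - 1 - k) = b * p n + (1 - b ^ 2) * p (n - 1)) :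
    ∀ m : ℕ, b ^ 2 * ((m : ℝ) + 3) * p (m + 2)
      = b * (b ^ 2 + 1) * (2 * (m : ℝ) + 3) * p (m + 1) - (m : ℝ) * (b ^ 2 - 1) ^ 2 * p m := by
  set P : ℝ⟦X⟧ := PowerSeries.mk p with hP
  set Cb : ℝ⟦X⟧ := PowerSeries.C b with hCb
  have hW : X * P ^ 2 - (Cb + (1 - Cb ^ 2) * X) * P + Cb = 0 := by
    ext n
    rcases n with _ | n
    · simp [hP, hCb, coeff_zero_eq_constantCoeff, h0]
    · have hc : (coeff n) (P * P) = ∑ k ∈ Finset.range (n + 1), p k * p (n - k) := by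
        rw [coeff_mul, Finset.Nat.sum_antidiagonal_eq_sum_range_succ_mk]
        simp [hP]
      have hst := hstar (n + 1) (by omega)
      simp only [Nat.add_sub_cancel] at hst
      have h1 : (coeff (n+1)) (X * P ^ 2) = b * p (n+1) + (1 - b^2) * p n := by
        rw [sq, coeff_succ_X_mul, hc, hst]
      have h2 : (coeff (n+1)) ((Cb + (1 - Cb ^ 2) * X) * P)
          = b * p (n+1) + (1 - b^2) * p n := by
        have he : (1 - Cb ^ 2) * X * P = PowerSeries.C (1 - b^2) * (X * P) := by
          rw [hCb, ← map_pow, ← map_one (PowerSeries.C (R := ℝ)), ← map_sub]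
          ring
        rw [add_mul, map_add, he, hCb, coeff_C_mul, coeff_C_mul, coeff_succ_X_mul]
        simp [hP]
      simp only [map_add, map_sub, h1, h2, coeff_C]
      simp [hCb, PowerSeries.coeff_C]
  set dP : ℝ⟦X⟧ := (d⁄dX ℝ) P with hdP
  have hDE : ((Cb + (1 - Cb ^ 2) * X) - 2 * X * P) * dP = P ^ 2 - (1 - Cb ^ 2) * P := by
    have h1 : (d⁄dX ℝ) (X * P ^ 2 - (Cb + (1 - Cb ^ 2) * X) * P + Cb) = 0 := by
      rw [hW]; simp
    have h2 : (d⁄dX ℝ) (X * P ^ 2 - (Cb + (1 - Cb ^ 2) * X) * P + Cb)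
        = P ^ 2 + 2 * X * P * dP - ((1 - Cb ^ 2) * P + (Cb + (1 - Cb ^ 2) * X) * dP) := by
      simp only [map_add, map_sub, Derivation.leibniz, Derivation.leibniz_pow,
        PowerSeries.derivative_X, PowerSeries.derivative_C, smul_eq_mul, mul_one,
        Derivation.map_one_eq_zero, hCb, hdP]
      ring
    rw [h2] at h1
    linear_combination -h1
  have hfinal : Cb ^ 2 * (X * dP) - 2 * Cb * (Cb ^ 2 + 1) * (X ^ 2 * dP)
      + (1 - Cb ^ 2) ^ 2 * (X ^ 3 * dP)
      = - Cb ^ 2 * P + Cb * (Cb ^ 2 + 1) * (X * P) + Cb ^ 2 + Cb * (Cb ^ 2 - 1) * X := by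
    linear_combination (X * ((Cb + (1 - Cb ^ 2) * X) - 2 * X * P)) * hDE
      + (-2 * X * P + 2 * X * (1 - Cb ^ 2) - (Cb + (1 - Cb ^ 2) * X) - 4 * X ^ 2 * dP) * hW
  have hfinal' : (PowerSeries.C (b^2)) * (X * dP)
      + (PowerSeries.C (-(2*b*(b^2+1)))) * (X^2 * dP)
      + (PowerSeries.C ((1-b^2)^2)) * (X^3 * dP)
      = (PowerSeries.C (-(b^2))) * P + (PowerSeries.C (b*(b^2+1))) * (X * P)
        + PowerSeries.C (b^2) + (PowerSeries.C (b*(b^2-1))) * X := by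
    simp only [map_neg, map_mul, map_pow, map_add, map_sub, map_one, map_ofNat, ← hCb]
    linear_combination hfinal
  intro m
  rcases m with _ | j
  · -- m = 0 : from hstar 2 directly
    have e2 := hstar 2 (by omega)
    simp [Finset.sum_range_succ, h0] at e2
    push_cast
    linear_combination -3*b*e2
  · -- m = j+1 : coefficient j+3 of hfinal'
    have hc := congrArg (coeff (j+3)) hfinal'
    rw [show (X:ℝ⟦X⟧) * dP = X^1 * dP by ring, show (X:ℝ⟦X⟧) * P = X^1 * P by ring] at hc
    simp only [map_add, coeff_C_mul, coeff_X_pow_mul', hdP, PowerSeries.coeff_derivative,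
      hP, coeff_mk, coeff_C, coeff_X] at hc
    norm_num at hc
    rw [show j+3-2 = j+1 from by omega, if_neg (by omega : ¬ (j+3 = 1))] at hc
    push_cast
    linear_combination hc

/-- Fix `a ≥ 1` and let `p, q : ℕ → ℝ` be the moment sequences determined by
`p 0 = q 0 = 1`, `p n = a² Σ_{k<n} q k · p (n-1-k)`, `q n = a⁻² Σ_{k<n} p k · q (n-1-k)`.
Then for every `n`, `∫_{(a-1/a)²}^{(a+1/a)²} xⁿ √(4a²x - (a⁴-1-a²x)²)/(2πx) dx = p n`;
in particular (for `n = 0`) the integrand is a probability density supported on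
`[(a-1/a)², (a+1/a)²]`, the radicand being nonnegative exactly on this interval. -/
theorem statement4
    (a : ℝ) (ha : 1 ≤ a)
    (p q : ℕ → ℝ) (hp0 : p 0 = 1) (hq0 : q 0 = 1)
    (hp : ∀ n : ℕ, 1 ≤ n →
      p n = a ^ 2 * ∑ k ∈ Finset.range n, q k * p (n - 1 - k))
    (hq : ∀ n : ℕ, 1 ≤ n →
      q n = (a ^ 2)⁻¹ * ∑ k ∈ Finset.range n, p k * q (n - 1 - k)) :
    (∀ n : ℕ,
      (∫ x in ((a - 1 / a) ^ 2)..((a + 1 / a) ^ 2),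
        x ^ n * (Real.sqrt (4 * a ^ 2 * x - (a ^ 4 - 1 - a ^ 2 * x) ^ 2) /
          (2 * Real.pi * x))) = p n) ∧
    (∀ x : ℝ, 0 ≤ 4 * a ^ 2 * x - (a ^ 4 - 1 - a ^ 2 * x) ^ 2 ↔
      x ∈ Set.Icc ((a - 1 / a) ^ 2) ((a + 1 / a) ^ 2)) := by
  have ha0 : a ≠ 0 := a_ne ha
  have ha2 : (a:ℝ)^2 ≠ 0 := pow_ne_zero _ ha0
  have ha4 : (a:ℝ)^4 ≠ 0 := pow_ne_zero _ ha0
  have hpi : (2*Real.pi) ≠ 0 := by positivity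
  -- q in terms of p
  have hpq4 : ∀ n : ℕ, 1 ≤ n → a^4 * q n = p n := by
    intro n hn
    have h1 := hp n hn
    have h2 := hq n hn
    have hrev : ∑ k ∈ Finset.range n, q k * p (n-1-k)
        = ∑ k ∈ Finset.range n, p k * q (n-1-k) := by
      rw [← Finset.sum_range_reflect (fun k => p k * q (n-1-k)) n]
      apply Finset.sum_congr rfl
      intro k hk
      have hk' : k < n := Finset.mem_range.mp hk
      rw [show n - 1 - (n-1-k) = k by omega]
      ring
    rw [h1, hrev, h2]
    field_simp
  -- the quadratic (star) identity for p
  have hstar : ∀ n : ℕ, 1 ≤ n →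
      ∑ k ∈ Finset.range n, p k * p (n - 1 - k)
        = a^2 * p n + (1 - (a^2)^2) * p (n-1) := by
    intro n hn
    obtain ⟨m, rfl⟩ : ∃ m, n = m + 1 := ⟨n-1, by omega⟩
    have h1 := hp (m+1) (by omega)
    rw [Finset.sum_range_succ'] at h1
    rw [Finset.sum_range_succ']
    simp only [Nat.add_sub_cancel, Nat.sub_zero] at h1 ⊢
    have key : a^4 * (∑ k ∈ Finset.range m, q (k+1) * p (m - (k+1)))
        = ∑ k ∈ Finset.range m, p (k+1) * p (m - (k+1)) := by
      rw [Finset.mul_sum]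
      apply Finset.sum_congr rfl
      intro k _
      rw [← hpq4 (k+1) (by omega)]
      ring
    rw [hq0] at h1
    rw [hp0]
    have h2 : a^2 * p (m+1)
        = (∑ k ∈ Finset.range m, p (k+1) * p (m - (k+1))) + a^4 * p m := by
      rw [h1]
      linear_combination key
    linear_combination -h2
  have hp1 : p 1 = a^2 := by
    have h1 := hp 1 (by omega)
    simp [Finset.sum_range_one, hq0, hp0] at h1
    rw [h1]
  -- holonomic recurrence for p
  have Rp := holonomic (a^2) p hp0 hstar
  -- the moments
  set M : ℕ → ℝ := fun n => ∫ x in al a..be a,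
    x ^ n * (Real.sqrt (rad a x) / (2 * Real.pi * x)) with hM
  have hM0 : M 0 = 1 := by
    have hcong : ∀ x : ℝ, x ^ 0 * (Real.sqrt (rad a x) / (2 * Real.pi * x))
        = (2*Real.pi)⁻¹ * (Real.sqrt (rad a x) / x) := by
      intro x
      rw [pow_zero, one_mul, div_mul_eq_div_div_swap, div_eq_inv_mul]
    show (∫ x in al a..be a, x ^ 0 * (Real.sqrt (rad a x) / (2 * Real.pi * x))) = 1
    rw [intervalIntegral.integral_congr (g := fun x => (2*Real.pi)⁻¹ * (Real.sqrt (rad a x) / x))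
      (fun x _ => hcong x)]
    rw [intervalIntegral.integral_const_mul, M_zero_int ha]
    field_simp
  have hMn : ∀ n : ℕ, 1 ≤ n → M n = (2*Real.pi)⁻¹ * Sint a (n-1) := by
    intro n hn
    obtain ⟨m, rfl⟩ : ∃ m, n = m + 1 := ⟨n-1, by omega⟩
    have hcong : ∀ x : ℝ, x ^ (m+1) * (Real.sqrt (rad a x) / (2 * Real.pi * x))
        = (2*Real.pi)⁻¹ * (x ^ m * Real.sqrt (rad a x)) := by
      intro x
      rcases eq_or_ne x 0 with h0 | h0
      · subst h0
        have hr0 : rad a 0 ≤ 0 := by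
          unfold rad; nlinarith [sq_nonneg (a^4 - 1)]
        rw [Real.sqrt_eq_zero_of_nonpos hr0]
        simp
      · rw [pow_succ]
        field_simp
    show (∫ x in al a..be a, x ^ (m+1) * (Real.sqrt (rad a x) / (2 * Real.pi * x)))
      = (2*Real.pi)⁻¹ * Sint a (m+1-1)
    rw [intervalIntegral.integral_congr
      (g := fun x => (2*Real.pi)⁻¹ * (x ^ m * Real.sqrt (rad a x))) (fun x _ => hcong x)]
    rw [intervalIntegral.integral_const_mul]
    rfl
  have hM1 : M 1 = a^2 := by
    rw [hMn 1 (by omega)]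
    show (2*Real.pi)⁻¹ * Sint a 0 = a^2
    rw [S_zero ha]
    field_simp
  have RM : ∀ m : ℕ, a^4*((m:ℝ)+3) * M (m+2)
      = a^2*(a^4+1)*(2*(m:ℝ)+3) * M (m+1) - (m:ℝ)*(a^4-1)^2 * M m := by
    intro m
    have hs := srec a ha m
    rw [hMn (m+2) (by omega), hMn (m+1) (by omega),
      show m+2-1 = m+1 by omega, show m+1-1 = m by omega]
    rcases Nat.eq_zero_or_pos m with hm | hm
    · subst hm
      push_cast
      simp only [Nat.cast_zero] at hs
      linear_combination (2*Real.pi)⁻¹ * hs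
    · rw [hMn m hm]
      linear_combination (2*Real.pi)⁻¹ * hs
  have key : ∀ n : ℕ, M n = p n := by
    intro n
    induction n using Nat.strong_induction_on with
    | _ n ih =>
      match n with
      | 0 => rw [hM0, hp0]
      | 1 => rw [hM1, hp1]
      | (m+2) =>
        have h1 := RM m
        have h2 := Rp m
        rw [ih (m+1) (by omega), ih m (by omega)] at h1
        have hne : (a:ℝ)^4*((m:ℝ)+3) ≠ 0 := by positivity
        have heq : a^4*((m:ℝ)+3) * M (m+2) = a^4*((m:ℝ)+3) * p (m+2) := by
          linear_combination h1 - h2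
        exact mul_left_cancel₀ hne heq
  constructor
  · intro n
    exact key n
  · intro x
    exact rad_nonneg_iff ha x
end

section
/- Fix a real number a > 0, and define sequences p, q : ℕ → ℝ by p(0) = q(0) = 1 and, for n ≥ 1, p(n) = a² · Σ_{k=0}^{n−1} q(k)·p(n−1−k) and q(n) = a^{−2} · Σ_{k=0}^{n−1} p(k)·q(n−1−k). Then q(n) = a^{−4}·p(n) for every integer n ≥ 1. Consequently, if μ_α, μ_β > 0 and a = (μ_α/μ_β)^{1/4}, then μ_β·p(n) = μ_α·q(n) for all n ≥ 1 (the traciality identity Tr_μ((T_{ε'}*T_{ε'})ⁿ) = Tr_μ((T_{ε'}T_{ε'}*)ⁿ) of the paper). -/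
/-- Fix `a > 0` and let `p, q : ℕ → ℝ` be the moment sequences determined by
`p 0 = q 0 = 1`, `p n = a² Σ_{k<n} q k · p (n-1-k)`, `q n = a⁻² Σ_{k<n} p k · q (n-1-k)`.
Then `q n = a⁻⁴ · p n` for all `n ≥ 1`. Consequently, if `μ_α, μ_β > 0` and
`a = (μ_α/μ_β)^{1/4}`, then `μ_β · p n = μ_α · q n` for all `n ≥ 1`. -/
theorem statement5
    (a : ℝ) (ha : 0 < a)
    (p q : ℕ → ℝ) (hp0 : p 0 = 1) (hq0 : q 0 = 1)
    (hp : ∀ n : ℕ, 1 ≤ n →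
      p n = a ^ 2 * ∑ k ∈ Finset.range n, q k * p (n - 1 - k))
    (hq : ∀ n : ℕ, 1 ≤ n →
      q n = (a ^ 2)⁻¹ * ∑ k ∈ Finset.range n, p k * q (n - 1 - k)) :
    (∀ n : ℕ, 1 ≤ n → q n = (a ^ 4)⁻¹ * p n) ∧
    (∀ μα μβ : ℝ, 0 < μα → 0 < μβ → a = (μα / μβ) ^ ((1 : ℝ) / 4) →
      ∀ n : ℕ, 1 ≤ n → μβ * p n = μα * q n) := by
  have ha2 : (a : ℝ) ^ 2 ≠ 0 := pow_ne_zero _ ha.ne'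
  have key : ∀ n : ℕ, 1 ≤ n → q n = (a ^ 4)⁻¹ * p n := by
    intro n hn
    have hsum : (∑ k ∈ Finset.range n, p k * q (n - 1 - k))
        = ∑ k ∈ Finset.range n, q k * p (n - 1 - k) := by
      rw [← Finset.sum_range_reflect (fun k => q k * p (n - 1 - k)) n]
      apply Finset.sum_congr rfl
      intro k hk
      have hk' : k ≤ n - 1 := Nat.le_sub_one_of_lt (Finset.mem_range.mp hk)
      rw [Nat.sub_sub_self hk', mul_comm]
    have h1 := hq n hn
    rw [hsum] at h1
    have h2 : (∑ k ∈ Finset.range n, q k * p (n - 1 - k)) = (a ^ 2)⁻¹ * p n := by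
      field_simp [hp n hn]
      rw [hp n hn]; ring
    rw [h1, h2, ← mul_assoc, ← mul_inv]
    norm_num [← pow_add]
  refine ⟨key, ?_⟩
  intro μα μβ hμα hμβ haeq n hn
  have ha4 : a ^ 4 = μα / μβ := by
    rw [haeq, ← Real.rpow_natCast ((μα / μβ) ^ ((1:ℝ)/4)) 4,
      ← Real.rpow_mul (le_of_lt (div_pos hμα hμβ))]
    norm_num
  rw [key n hn, ha4]
  field_simp
end

section
/- Fix a real number a ≥ 1, and define sequences p, q : ℕ → ℝ by p(0) = q(0) = 1 and, for n ≥ 1, p(n) = a² · Σ_{k=0}^{n−1} q(k)·p(n−1−k) and q(n) = a^{−2} · Σ_{k=0}^{n−1} p(k)·q(n−1−k). Then for every real x > (a + 1/a)², the series Σ_{n=0}^∞ p(n)·x^{−(n+1)} converges absolutely, and its sum equals (a²x − (a⁴ − 1) − a²·√((x − (a−1/a)²)·(x − (a+1/a)²)))/(2x), where √ denotes the nonnegative square root. (This is the Cauchy transform of the normalized law of T_{ε'}*T_{ε'} computed in the paper.) -/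
open Finset

set_option maxHeartbeats 1000000

lemma tri_le (f g : ℕ → ℝ) (hf : ∀ k, 0 ≤ f k) (hg : ∀ k, 0 ≤ g k) (N : ℕ) :
    ∑ m ∈ range N, ∑ k ∈ range (m + 1), f k * g (m - k) ≤
      (∑ k ∈ range N, f k) * (∑ k ∈ range N, g k) := by
  have hdisj : (↑(range N) : Set ℕ).PairwiseDisjoint (fun m => Finset.HasAntidiagonal.antidiagonal m) := by
    intro m _ m' _ hne
    simp only [Finset.disjoint_left]
    intro ij h1 h2
    rw [Finset.HasAntidiagonal.mem_antidiagonal] at h1 h2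
    exact hne (h1 ▸ h2)
  have key : ∑ m ∈ range N, ∑ k ∈ range (m + 1), f k * g (m - k)
      = ∑ ij ∈ (range N).biUnion (fun m => Finset.HasAntidiagonal.antidiagonal m), f ij.1 * g ij.2 := by
    rw [Finset.sum_biUnion hdisj]
    exact Finset.sum_congr rfl fun m _ =>
      (Finset.Nat.sum_antidiagonal_eq_sum_range_succ (fun k l => f k * g l) m).symm
  rw [key, Finset.sum_mul_sum, ← Finset.sum_product']
  refine Finset.sum_le_sum_of_subset_of_nonneg ?_ (fun ij _ _ => mul_nonneg (hf _) (hg _))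
  intro ij hij
  rw [Finset.mem_biUnion] at hij
  obtain ⟨m, hm, hij⟩ := hij
  rw [Finset.HasAntidiagonal.mem_antidiagonal] at hij
  rw [Finset.mem_range] at hm
  rw [Finset.mem_product, Finset.mem_range, Finset.mem_range]
  omega

/-- Fix `a ≥ 1` and let `p, q : ℕ → ℝ` be the moment sequences determined by
`p 0 = q 0 = 1`, `p n = a² Σ_{k<n} q k · p (n-1-k)`, `q n = a⁻² Σ_{k<n} p k · q (n-1-k)`.
Then for every real `x > (a + 1/a)²`, the series `Σ_n p(n) x^{-(n+1)}` converges absolutely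
and its sum (the Cauchy transform of the law of `T_{ε'}* T_{ε'}`) equals
`(a²x - (a⁴ - 1) - a² √((x - (a-1/a)²)(x - (a+1/a)²)))/(2x)`. -/
theorem statement7
    (a : ℝ) (ha : 1 ≤ a)
    (p q : ℕ → ℝ) (hp0 : p 0 = 1) (hq0 : q 0 = 1)
    (hp : ∀ n : ℕ, 1 ≤ n →
      p n = a ^ 2 * ∑ k ∈ Finset.range n, q k * p (n - 1 - k))
    (hq : ∀ n : ℕ, 1 ≤ n →
      q n = (a ^ 2)⁻¹ * ∑ k ∈ Finset.range n, p k * q (n - 1 - k)) :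
    ∀ x : ℝ, (a + 1 / a) ^ 2 < x →
      Summable (fun n : ℕ => |p n / x ^ (n + 1)|) ∧
      ∑' n : ℕ, p n / x ^ (n + 1) =
        (a ^ 2 * x - (a ^ 4 - 1) -
          a ^ 2 * Real.sqrt ((x - (a - 1 / a) ^ 2) * (x - (a + 1 / a) ^ 2))) / (2 * x) := by
  have ha0 : (0:ℝ) < a := lt_of_lt_of_le one_pos ha
  have ha0' : a ≠ 0 := ha0.ne'
  -- nonnegativity of p and q
  have hpq : ∀ n, 0 ≤ p n ∧ 0 ≤ q n := by
    intro n
    induction n using Nat.strong_induction_on with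
    | _ n ih =>
      match n with
      | 0 => constructor <;> simp [hp0, hq0]
      | Nat.succ m =>
        constructor
        · rw [hp (m+1) (by omega)]
          refine mul_nonneg (by positivity) (Finset.sum_nonneg fun k hk => ?_)
          rw [Finset.mem_range] at hk
          exact mul_nonneg (ih k (by omega)).2 (ih (m + 1 - 1 - k) (by omega)).1
        · rw [hq (m+1) (by omega)]
          refine mul_nonneg (by positivity) (Finset.sum_nonneg fun k hk => ?_)
          rw [Finset.mem_range] at hk
          exact mul_nonneg (ih k (by omega)).1 (ih (m + 1 - 1 - k) (by omega)).2
  intro x hx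
  have hx0 : 0 < x := lt_of_le_of_lt (by positivity) hx
  have hx0' : x ≠ 0 := hx0.ne'
  have hinv : x * x⁻¹ = 1 := mul_inv_cancel₀ hx0'
  have hinv2 : a ^ 2 * (a ^ 2)⁻¹ = 1 := mul_inv_cancel₀ (pow_ne_zero 2 ha0')
  obtain ⟨S, hSdef⟩ : ∃ S, S = Real.sqrt ((x - (a - 1 / a) ^ 2) * (x - (a + 1 / a) ^ 2)) :=
    ⟨_, rfl⟩
  have hfac2 : 0 < x - (a + 1/a) ^ 2 := by linarith
  have hfac1 : 0 < x - (a - 1/a) ^ 2 := by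
    have h4 : (a + 1/a) ^ 2 - (a - 1/a) ^ 2 = 4 := by field_simp; ring
    linarith
  have hprod : 0 < (x - (a - 1 / a) ^ 2) * (x - (a + 1 / a) ^ 2) := mul_pos hfac1 hfac2
  have hS : 0 < S := hSdef ▸ Real.sqrt_pos.mpr hprod
  have hS2 : S ^ 2 = (x - (a - 1 / a) ^ 2) * (x - (a + 1 / a) ^ 2) := by
    rw [hSdef]; exact Real.sq_sqrt hprod.le
  obtain ⟨B, hBdef⟩ : ∃ B : ℝ, B = a ^ 2 * x - (a ^ 4 - 1) := ⟨_, rfl⟩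
  have hD : a ^ 4 * S ^ 2 = B ^ 2 - 4 * a ^ 2 * x := by
    rw [hS2, hBdef]; field_simp; ring
  have hB : 0 < B := by
    rw [hBdef]
    have e : a ^ 2 * (a + 1/a) ^ 2 = (a ^ 2 + 1) ^ 2 := by field_simp
    nlinarith [mul_lt_mul_of_pos_left hx (pow_pos ha0 2), sq_nonneg a]
  have hSB : a ^ 2 * S < B := by
    have h1 : (a ^ 2 * S) ^ 2 < B ^ 2 := by
      nlinarith [hD, mul_pos hx0 (pow_pos ha0 2)]
    exact lt_of_pow_lt_pow_left₀ 2 hB.le h1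
  obtain ⟨g, hgdef⟩ : ∃ g : ℝ, g = (B - a ^ 2 * S) / (2 * x) := ⟨_, rfl⟩
  obtain ⟨h, hhdef⟩ : ∃ h : ℝ, h = (g + (a ^ 4 - 1) / x) / a ^ 4 := ⟨_, rfl⟩
  have ha4 : (1:ℝ) ≤ a ^ 4 := by
    calc (1:ℝ) = 1 ^ 4 := by norm_num
    _ ≤ a ^ 4 := pow_le_pow_left₀ (by norm_num) ha 4
  have hg_pos : 0 < g := hgdef ▸ div_pos (by linarith) (by linarith)
  have hh_pos : 0 < h := by
    rw [hhdef]
    apply div_pos _ (by positivity)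
    have : 0 ≤ (a ^ 4 - 1) / x := div_nonneg (by linarith) hx0.le
    linarith
  have hgx : 2 * x * g = B - a ^ 2 * S := by
    rw [hgdef]; field_simp
  have hhx : a ^ 4 * (x * h) = x * g + (a ^ 4 - 1) := by
    rw [hhdef]; field_simp
  have hquadT : 4 * x ^ 2 * (x * g ^ 2 - B * g + a ^ 2) = 0 := by
    linear_combination (x * (2 * x * g - B - a ^ 2 * S)) * hgx + x * hD
  have hquad_g : x * g ^ 2 - B * g + a ^ 2 = 0 := by
    rcases mul_eq_zero.mp hquadT with h9 | h9
    · exact absurd h9 (by positivity)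
    · exact h9
  have hfp1 : 1 / x + a ^ 2 * (h * g) = g := by
    have h7 : a ^ 2 * x * (1 / x + a ^ 2 * (h * g) - g) = 0 := by
      linear_combination a ^ 2 * hinv + g * hhx + hquad_g + g * hBdef
    rcases mul_eq_zero.mp h7 with h9 | h9
    · exact absurd h9 (by positivity)
    · linarith
  have hfp2 : 1 / x + (a ^ 2)⁻¹ * (g * h) = h := by
    have h7 : a ^ 6 * x * (1 / x + (a ^ 2)⁻¹ * (g * h) - h) = 0 := by
      linear_combination a ^ 6 * hinv + (a ^ 4 * x * g * h) * hinv2 + (g - a ^ 2) * hhx +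
        hquad_g + g * hBdef
    rcases mul_eq_zero.mp h7 with h9 | h9
    · exact absurd h9 (by positivity)
    · linarith
  -- the summand sequences
  obtain ⟨fp, hfpdef⟩ : ∃ fp : ℕ → ℝ, fp = fun n => p n / x ^ (n + 1) := ⟨_, rfl⟩
  obtain ⟨fq, hfqdef⟩ : ∃ fq : ℕ → ℝ, fq = fun n => q n / x ^ (n + 1) := ⟨_, rfl⟩
  have hfp_nn : ∀ n, 0 ≤ fp n := fun n => by
    rw [hfpdef]; exact div_nonneg (hpq n).1 (pow_nonneg hx0.le _)
  have hfq_nn : ∀ n, 0 ≤ fq n := fun n => by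
    rw [hfqdef]; exact div_nonneg (hpq n).2 (pow_nonneg hx0.le _)
  -- term identities
  have hterm_p : ∀ m : ℕ, fp (m + 1) = a ^ 2 * ∑ k ∈ range (m + 1), fq k * fp (m - k) := by
    intro m
    have hrec := hp (m + 1) (by omega)
    simp only [Nat.add_sub_cancel] at hrec
    simp only [hfpdef, hfqdef, hrec, Finset.mul_sum, Finset.sum_div]
    refine Finset.sum_congr rfl fun k hk => ?_
    rw [Finset.mem_range] at hk
    have hxp : (x:ℝ) ^ (m + 1 + 1) = x ^ (k + 1) * x ^ (m - k + 1) := by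
      rw [← pow_add]; congr 1; omega
    rw [hxp]
    have hk1 : (x:ℝ) ^ (k + 1) ≠ 0 := pow_ne_zero _ hx0'
    have hk2 : (x:ℝ) ^ (m - k + 1) ≠ 0 := pow_ne_zero _ hx0'
    field_simp
  have hterm_q : ∀ m : ℕ, fq (m + 1) = (a ^ 2)⁻¹ * ∑ k ∈ range (m + 1), fp k * fq (m - k) := by
    intro m
    have hrec := hq (m + 1) (by omega)
    simp only [Nat.add_sub_cancel] at hrec
    simp only [hfpdef, hfqdef, hrec, Finset.mul_sum, Finset.sum_div]
    refine Finset.sum_congr rfl fun k hk => ?_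
    rw [Finset.mem_range] at hk
    have hxp : (x:ℝ) ^ (m + 1 + 1) = x ^ (k + 1) * x ^ (m - k + 1) := by
      rw [← pow_add]; congr 1; omega
    rw [hxp]
    have hk1 : (x:ℝ) ^ (k + 1) ≠ 0 := pow_ne_zero _ hx0'
    have hk2 : (x:ℝ) ^ (m - k + 1) ≠ 0 := pow_ne_zero _ hx0'
    field_simp
  have hfp0 : fp 0 = 1 / x := by rw [hfpdef]; simp [hp0]
  have hfq0 : fq 0 = 1 / x := by rw [hfqdef]; simp [hq0]
  -- bounded partial sums
  have hbound : ∀ N, (∑ n ∈ range N, fp n) ≤ g ∧ (∑ n ∈ range N, fq n) ≤ h := by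
    intro N
    induction N with
    | zero => simp [hg_pos.le, hh_pos.le]
    | succ N ih =>
      have hPnn : 0 ≤ ∑ n ∈ range N, fp n := Finset.sum_nonneg fun n _ => hfp_nn n
      have hQnn : 0 ≤ ∑ n ∈ range N, fq n := Finset.sum_nonneg fun n _ => hfq_nn n
      constructor
      · rw [Finset.sum_range_succ' fp N, hfp0]
        have h1 : ∑ m ∈ range N, fp (m + 1)
            = a ^ 2 * ∑ m ∈ range N, ∑ k ∈ range (m + 1), fq k * fp (m - k) := by
          rw [Finset.mul_sum]; exact Finset.sum_congr rfl fun m _ => hterm_p m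
        have h2 := tri_le fq fp hfq_nn hfp_nn N
        have h3 : (∑ k ∈ range N, fq k) * (∑ k ∈ range N, fp k) ≤ h * g :=
          mul_le_mul ih.2 ih.1 hPnn hh_pos.le
        have h4 : ∑ m ∈ range N, fp (m + 1) ≤ a ^ 2 * (h * g) := by
          rw [h1]
          exact mul_le_mul_of_nonneg_left (le_trans h2 h3) (by positivity)
        linarith [hfp1]
      · rw [Finset.sum_range_succ' fq N, hfq0]
        have h1 : ∑ m ∈ range N, fq (m + 1)
            = (a ^ 2)⁻¹ * ∑ m ∈ range N, ∑ k ∈ range (m + 1), fp k * fq (m - k) := by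
          rw [Finset.mul_sum]; exact Finset.sum_congr rfl fun m _ => hterm_q m
        have h2 := tri_le fp fq hfp_nn hfq_nn N
        have h3 : (∑ k ∈ range N, fp k) * (∑ k ∈ range N, fq k) ≤ g * h :=
          mul_le_mul ih.1 ih.2 hQnn hg_pos.le
        have h4 : ∑ m ∈ range N, fq (m + 1) ≤ (a ^ 2)⁻¹ * (g * h) := by
          rw [h1]
          exact mul_le_mul_of_nonneg_left (le_trans h2 h3) (by positivity)
        linarith [hfp2]
  -- summability
  have hsum_p : Summable fp := summable_of_sum_range_le hfp_nn fun N => (hbound N).1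
  have hsum_q : Summable fq := summable_of_sum_range_le hfq_nn fun N => (hbound N).2
  have habs : (fun n : ℕ => |p n / x ^ (n + 1)|) = fp := by
    funext n
    rw [← abs_of_nonneg (hfp_nn n), hfpdef]
  constructor
  · rw [habs]; exact hsum_p
  obtain ⟨G, hGdef⟩ : ∃ G : ℝ, G = ∑' n, fp n := ⟨_, rfl⟩
  obtain ⟨H, hHdef⟩ : ∃ H : ℝ, H = ∑' n, fq n := ⟨_, rfl⟩
  have hG_le : G ≤ g := by
    rw [hGdef]
    exact Real.tsum_le_of_sum_range_le hfp_nn fun N => (hbound N).1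
  have hnorm_p : Summable fun n => ‖fp n‖ := by
    simpa [Real.norm_eq_abs, abs_of_nonneg (hfp_nn _)] using hsum_p
  have hnorm_q : Summable fun n => ‖fq n‖ := by
    simpa [Real.norm_eq_abs, abs_of_nonneg (hfq_nn _)] using hsum_q
  have hshift_p : ∑' n : ℕ, fp (n + 1) = (∑' n : ℕ, fp n) - 1 / x := by
    have h0 := Summable.tsum_eq_zero_add hsum_p
    rw [hfp0] at h0
    linarith
  have hshift_q : ∑' n : ℕ, fq (n + 1) = (∑' n : ℕ, fq n) - 1 / x := by
    have h0 := Summable.tsum_eq_zero_add hsum_q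
    rw [hfq0] at h0
    linarith
  -- Cauchy products
  have ha2ne : ((a:ℝ) ^ 2) ≠ 0 := pow_ne_zero 2 ha0'
  have eq1 : a ^ 2 * (H * G) = G - 1 / x := by
    rw [hHdef, hGdef, tsum_mul_tsum_eq_tsum_sum_range_of_summable_norm hnorm_q hnorm_p,
      ← hshift_p, ← tsum_mul_left]
    exact tsum_congr fun m => by rw [hterm_p m]
  have eq2 : G * H = a ^ 2 * (H - 1 / x) := by
    rw [hGdef, hHdef, tsum_mul_tsum_eq_tsum_sum_range_of_summable_norm hnorm_p hnorm_q,
      ← hshift_q, ← tsum_mul_left]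
    refine tsum_congr fun m => ?_
    rw [hterm_q m, mul_inv_cancel_left₀ ha2ne]
  -- the quadratic for G
  have hquad_G : x * G ^ 2 - B * G + a ^ 2 = 0 := by
    linear_combination (a ^ 2 * x * G) * eq2 + (x * (a ^ 2 - G)) * eq1 -
      (a ^ 4 * G + a ^ 2 - G) * hinv - G * hBdef
  -- conclude G = g
  have hdiff : (G - g) * (x * (G + g) - B) = 0 := by
    linear_combination hquad_G - hquad_g
  have hGg : G = g := by
    rcases mul_eq_zero.mp hdiff with h1 | h2
    · linarith
    · exfalso
      have h2' : x * G + x * g = B := by linear_combination h2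
      have hxGg : x * G ≤ x * g := mul_le_mul_of_nonneg_left hG_le hx0.le
      have hpos : 0 < a ^ 2 * S := mul_pos (pow_pos ha0 2) hS
      linarith [hgx]
  calc ∑' n : ℕ, p n / x ^ (n + 1) = ∑' n, fp n := by rw [hfpdef]
    _ = G := hGdef.symm
    _ = g := hGg
    _ = _ := by rw [hgdef, hBdef, hSdef]
end
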